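/- arXiv:2008.01799 — 6 statements merged into one kernel-verified Lean document; each statement's English description precedes it below -/
import Mathlib

section
/- Let K_1, K_2, H_1, H_2 be complex Hilbert spaces, A : K_1 → H_1, B : K_2 → H_2 and X : K_2 → H_1 bounded operators, and let T : K_1 ⊕ K_2 → H_1 ⊕ H_2 be the block operator T(k_1, k_2) = (A k_1 + X k_2, B k_2), i.e. T = [[A, X], [0, B]]. Then ‖T‖ ≤ 1 if and only if ‖A‖ ≤ 1, ‖B‖ ≤ 1, and there exists a bounded operator L : K_2 → H_1 with ‖L‖ ≤ 1 such that X = D_{A*} ∘ L ∘ D_B. (Applied with K_i = H_i^n, this characterizes when an upper-triangular 2×2 block of row operators is a row contraction.) -/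
open scoped InnerProductSpace

set_option maxHeartbeats 1000000
set_option synthInstance.maxHeartbeats 400000

noncomputable section

namespace RowContr

instance {n : ℕ} {H : Type*} [NormedAddCommGroup H] [CompleteSpace H] :
    CompleteSpace (PiLp 2 fun _ : Fin n => H) :=
  inferInstance

/-- Ordered product `T^α = T 0 ^ α 0 ⬝ ⋯ ⬝ T (n-1) ^ α (n-1)`
(for commuting tuples the order is immaterial). -/
def mpow {n : ℕ} {H : Type*} [NormedAddCommGroup H] [InnerProductSpace ℂ H]
    (T : Fin n → H →L[ℂ] H) (α : Fin n → ℕ) : H →L[ℂ] H :=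
  (List.ofFn fun i => (T i) ^ (α i)).prod

/-- The finset of all multi-indices `α : Fin n → ℕ` with `|α| = k`. -/
def multiIdx (n k : ℕ) : Finset (Fin n → ℕ) :=
  (Fintype.piFinset fun _ : Fin n => Finset.range (k + 1)).filter fun α => ∑ i, α i = k

/-- The row operator `E^n → F` associated with a tuple of operators, acting on the
Hilbert direct sum `PiLp 2`. -/
def rowOp {n : ℕ} {E F : Type*} [NormedAddCommGroup E] [InnerProductSpace ℂ E]
    [NormedAddCommGroup F] [InnerProductSpace ℂ F]
    (T : Fin n → E →L[ℂ] F) : PiLp 2 (fun _ : Fin n => E) →L[ℂ] F :=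
  ∑ i, (T i).comp (PiLp.proj 2 (fun _ : Fin n => E) i)

/-- The `α`-th Taylor coefficient of the characteristic function of `T`, where `Dstar`
plays the role of the defect operator `D_{T*}` and `D` the role of `D_T`:
`θ_{T,α} = ∑_{j : α_j ≥ 1} γ_{α-e_j} • D_{T*} T^{*(α-e_j)} P_j D_T`. -/
def charCoeff {n : ℕ} {H : Type*} [NormedAddCommGroup H] [InnerProductSpace ℂ H]
    [CompleteSpace H] (T : Fin n → H →L[ℂ] H) (Dstar : H →L[ℂ] H)
    (D : PiLp 2 (fun _ : Fin n => H) →L[ℂ] PiLp 2 (fun _ : Fin n => H))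
    (α : Fin n → ℕ) : PiLp 2 (fun _ : Fin n => H) →L[ℂ] H :=
  ∑ j ∈ Finset.univ.filter (fun j => 0 < α j),
    (Nat.multinomial Finset.univ (α - Pi.single j 1) : ℂ) •
      (Dstar ∘L (star (mpow T (α - Pi.single j 1))) ∘L (PiLp.proj 2 (fun _ : Fin n => H) j) ∘L D)

/-- The closure of the span of `{T^α D_{T*} h : h ∈ H, |α| ≥ m}`. -/
def rangeSpanGE {n : ℕ} {H : Type*} [NormedAddCommGroup H] [InnerProductSpace ℂ H]
    (T : Fin n → H →L[ℂ] H) (Dstar : H →L[ℂ] H) (m : ℕ) : Submodule ℂ H :=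
  (Submodule.span ℂ
    {x : H | ∃ (α : Fin n → ℕ) (h : H), m ≤ ∑ i, α i ∧ x = mpow T α (Dstar h)}).topologicalClosure

/-- The closure of the span of `{T^α D_{T*} h : h ∈ H, |α| = m}`. -/
def rangeSpanEQ {n : ℕ} {H : Type*} [NormedAddCommGroup H] [InnerProductSpace ℂ H]
    (T : Fin n → H →L[ℂ] H) (Dstar : H →L[ℂ] H) (m : ℕ) : Submodule ℂ H :=
  (Submodule.span ℂ
    {x : H | ∃ (α : Fin n → ℕ) (h : H), ∑ i, α i = m ∧ x = mpow T α (Dstar h)}).topologicalClosure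

/-- The closure of the span of `{T^α D_{T*} h : h ∈ H, α ∈ ℕ^n}`. -/
def rangeSpanAll {n : ℕ} {H : Type*} [NormedAddCommGroup H] [InnerProductSpace ℂ H]
    (T : Fin n → H →L[ℂ] H) (Dstar : H →L[ℂ] H) : Submodule ℂ H :=
  (Submodule.span ℂ
    {x : H | ∃ (α : Fin n → ℕ) (h : H), x = mpow T α (Dstar h)}).topologicalClosure

/-- The set `H_c = {h ∈ H : ∑_{|α| = k} γ_α ‖T^{*α} h‖² = ‖h‖² for all k ∈ ℕ}`. -/
def Hc {n : ℕ} {H : Type*} [NormedAddCommGroup H] [InnerProductSpace ℂ H] [CompleteSpace H]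
    (T : Fin n → H →L[ℂ] H) : Set H :=
  {h : H | ∀ k : ℕ, ∑ α ∈ multiIdx n k,
    (Nat.multinomial Finset.univ α : ℝ) * ‖star (mpow T α) h‖ ^ 2 = ‖h‖ ^ 2}

open ContinuousLinearMap

lemma aux_douglas {E F : Type*} [NormedAddCommGroup E] [InnerProductSpace ℂ E] [CompleteSpace E]
    [NormedAddCommGroup F] [InnerProductSpace ℂ F] [CompleteSpace F]
    (Q : E →L[ℂ] E) (v : E →L[ℂ] F) (hb : ∀ e, ‖v e‖ ≤ ‖Q e‖) :
    ∃ L : E →L[ℂ] F, (∀ x, ‖L x‖ ≤ ‖x‖) ∧ (∀ e, L (Q e) = v e) ∧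
      ∀ m ∈ ((LinearMap.range (Q : E →ₗ[ℂ] E)).topologicalClosure)ᗮ, L m = 0 := by
  have key : ∀ e e' : E, Q e = Q e' → v e = v e' := by
    intro e e' h
    have h2 := hb (e - e')
    rw [map_sub, map_sub, h, sub_self, norm_zero] at h2
    exact sub_eq_zero.mp (norm_le_zero_iff.mp h2)
  set R : Submodule ℂ E := LinearMap.range (Q : E →ₗ[ℂ] E) with hR
  have pre : ∀ x : ↥R, ∃ y, Q y = (x : E) := fun x => LinearMap.mem_range.mp x.2
  have hpre : ∀ x : ↥R, Q (pre x).choose = (x : E) := fun x => (pre x).choose_spec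
  have keyv : ∀ (x : ↥R) (y : E), Q y = (x : E) → v (pre x).choose = v y :=
    fun x y hy => key _ _ (by rw [hpre, hy])
  let f₀ : ↥R →ₗ[ℂ] F :=
    { toFun := fun x => v (pre x).choose
      map_add' := by
        intro x y
        rw [← map_add]
        exact keyv _ _ (by rw [map_add, hpre, hpre]; rfl)
      map_smul' := by
        intro c x
        simp only [RingHom.id_apply]
        rw [← map_smul]
        exact keyv _ _ (by rw [map_smul, hpre]; rfl) }
  have hf₀ : ∀ x : ↥R, ‖f₀ x‖ ≤ 1 * ‖x‖ := by
    intro x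
    rw [one_mul]
    calc ‖v (pre x).choose‖ ≤ ‖Q (pre x).choose‖ := hb _
      _ = ‖(x : E)‖ := by rw [hpre]
      _ = ‖x‖ := rfl
  let f : ↥R →L[ℂ] F := f₀.mkContinuous 1 hf₀
  have hf : ∀ x : ↥R, ‖f x‖ ≤ ‖x‖ := fun x => by
    have h := hf₀ x; rw [one_mul] at h; exact h
  let e : ↥R →L[ℂ] ↥R.topologicalClosure :=
    (Submodule.inclusion (Submodule.le_topologicalClosure R)).mkContinuous 1
      (fun x => by rw [one_mul]; rfl)
  have he_norm : ∀ x : ↥R, ‖e x‖ = ‖x‖ := fun x => rfl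
  have h_e : IsUniformInducing e :=
    (AddMonoidHomClass.isometry_of_norm e he_norm).isUniformInducing
  have h_dense : DenseRange e := by
    intro y
    rw [closure_subtype]
    have himg : (Subtype.val '' Set.range e) = (R : Set E) := by
      rw [← Set.range_comp]
      have : (Subtype.val ∘ e) = fun x : ↥R => (x : E) := rfl
      rw [this]
      exact Subtype.range_coe
    rw [himg, ← Submodule.topologicalClosure_coe]
    exact y.2
  let g : ↥R.topologicalClosure →L[ℂ] F := f.extend e
  have hg : ∀ s : ↥R.topologicalClosure, ‖g s‖ ≤ ‖s‖ := by
    have hcl : IsClosed {s : ↥R.topologicalClosure | ‖g s‖ ≤ ‖s‖} :=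
      isClosed_le (g.continuous.norm) continuous_norm
    intro s
    refine h_dense.induction_on s hcl (fun x => ?_)
    show ‖g (e x)‖ ≤ ‖e x‖
    rw [ContinuousLinearMap.extend_eq f h_dense h_e, he_norm]
    exact hf x
  refine ⟨g ∘L Submodule.orthogonalProjection R.topologicalClosure, ?_, ?_, ?_⟩
  · intro x
    calc ‖g (Submodule.orthogonalProjection R.topologicalClosure x)‖
        ≤ ‖Submodule.orthogonalProjection R.topologicalClosure x‖ := hg _
      _ ≤ ‖Submodule.orthogonalProjection R.topologicalClosure‖ * ‖x‖ := le_opNorm _ _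
      _ ≤ 1 * ‖x‖ := by
          exact mul_le_mul_of_nonneg_right (Submodule.orthogonalProjection_norm_le _) (norm_nonneg x)
      _ = ‖x‖ := one_mul _
  · intro y
    have hmem : Q y ∈ R.topologicalClosure :=
      Submodule.le_topologicalClosure R ⟨y, rfl⟩
    have hproj : Submodule.orthogonalProjection R.topologicalClosure (Q y)
        = ⟨Q y, hmem⟩ := Submodule.orthogonalProjection_mem_subspace_eq_self (⟨Q y, hmem⟩ : _)
    have hee : (⟨Q y, hmem⟩ : ↥R.topologicalClosure) = e ⟨Q y, ⟨y, rfl⟩⟩ := rfl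
    rw [ContinuousLinearMap.comp_apply, hproj, hee, ContinuousLinearMap.extend_eq f h_dense h_e]
    exact keyv _ _ rfl
  · intro m hm
    have : Submodule.orthogonalProjection R.topologicalClosure m = 0 :=
      Submodule.orthogonalProjectionOnto_apply_of_mem_orthogonal hm
    rw [ContinuousLinearMap.comp_apply, this, map_zero]

lemma aux_hre {H : Type*} [NormedAddCommGroup H] [InnerProductSpace ℂ H] (z : H) :
    (⟪z, z⟫_ℂ).re = ‖z‖ ^ 2 := by
  rw [← RCLike.re_to_complex]
  exact inner_self_eq_norm_sq z

lemma aux_defect {K H : Type*} [NormedAddCommGroup K] [InnerProductSpace ℂ K] [CompleteSpace K]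
    [NormedAddCommGroup H] [InnerProductSpace ℂ H] [CompleteSpace H]
    (B : K →L[ℂ] H) (Q : K →L[ℂ] K) (hQsa : IsSelfAdjoint Q)
    (hQ2 : Q ∘L Q = 1 - ContinuousLinearMap.adjoint B ∘L B) (k : K) :
    ‖Q k‖ ^ 2 + ‖B k‖ ^ 2 = ‖k‖ ^ 2 := by
  have hQad : ContinuousLinearMap.adjoint Q = Q := by
    rw [← ContinuousLinearMap.star_eq_adjoint]; exact hQsa
  have h1 : ⟪Q k, Q k⟫_ℂ = ⟪k, k⟫_ℂ - ⟪B k, B k⟫_ℂ := by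
    calc ⟪Q k, Q k⟫_ℂ = ⟪ContinuousLinearMap.adjoint Q k, Q k⟫_ℂ := by rw [hQad]
      _ = ⟪k, Q (Q k)⟫_ℂ := adjoint_inner_left Q (Q k) k
      _ = ⟪k, k - ContinuousLinearMap.adjoint B (B k)⟫_ℂ := by
          have : Q (Q k) = (Q ∘L Q) k := rfl
          rw [this, hQ2]; rfl
      _ = ⟪k, k⟫_ℂ - ⟪k, ContinuousLinearMap.adjoint B (B k)⟫_ℂ := inner_sub_right _ _ _
      _ = ⟪k, k⟫_ℂ - ⟪B k, B k⟫_ℂ := by rw [adjoint_inner_right]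
  have h2 := congrArg Complex.re h1
  rw [Complex.sub_re, aux_hre, aux_hre, aux_hre] at h2
  linarith

lemma aux_rowbound {K₁ H₁ : Type*} [NormedAddCommGroup K₁] [InnerProductSpace ℂ K₁] [CompleteSpace K₁]
    [NormedAddCommGroup H₁] [InnerProductSpace ℂ H₁] [CompleteSpace H₁]
    (A : K₁ →L[ℂ] H₁) (P : H₁ →L[ℂ] H₁) (hPsa : IsSelfAdjoint P)
    (hP2 : P ∘L P = 1 - A ∘L ContinuousLinearMap.adjoint A) (k : K₁) (h : H₁) :
    ‖A k + P h‖ ^ 2 ≤ ‖k‖ ^ 2 + ‖h‖ ^ 2 := by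
  have hPad : ContinuousLinearMap.adjoint P = P := by
    rw [← ContinuousLinearMap.star_eq_adjoint]; exact hPsa
  set y := A k + P h with hy
  have hdef : ‖P y‖ ^ 2 + ‖ContinuousLinearMap.adjoint A y‖ ^ 2 = ‖y‖ ^ 2 :=
    aux_defect (ContinuousLinearMap.adjoint A) P hPsa (by rwa [adjoint_adjoint]) y
  have e1 : (‖y‖ ^ 2 : ℝ) = (⟪y, A k⟫_ℂ).re + (⟪y, P h⟫_ℂ).re := by
    have h0 : ⟪y, y⟫_ℂ = ⟪y, A k⟫_ℂ + ⟪y, P h⟫_ℂ := by rw [hy, inner_add_right]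
    have h2 := congrArg Complex.re h0
    rwa [Complex.add_re, aux_hre] at h2
  have e2 : (⟪y, A k⟫_ℂ).re ≤ ‖ContinuousLinearMap.adjoint A y‖ * ‖k‖ := by
    rw [← adjoint_inner_left]
    exact (Complex.re_le_norm _).trans (norm_inner_le_norm _ _)
  have e3 : (⟪y, P h⟫_ℂ).re ≤ ‖P y‖ * ‖h‖ := by
    have h3 := adjoint_inner_left P h y
    rw [hPad] at h3
    rw [← h3]
    exact (Complex.re_le_norm _).trans (norm_inner_le_norm _ _)
  set a := ‖ContinuousLinearMap.adjoint A y‖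
  set c := ‖P y‖
  have ha : 0 ≤ a := norm_nonneg _
  have hc : 0 ≤ c := norm_nonneg _
  have hk : 0 ≤ ‖k‖ := norm_nonneg _
  have hh : 0 ≤ ‖h‖ := norm_nonneg _
  have e4 : ‖y‖ ^ 2 ≤ a * ‖k‖ + c * ‖h‖ := by linarith
  by_cases hy0 : ‖y‖ = 0
  · have hpos : (0 : ℝ) ≤ ‖k‖ ^ 2 + ‖h‖ ^ 2 := by positivity
    simpa [hy0] using hpos
  · have hy1 : 0 < ‖y‖ := lt_of_le_of_ne (norm_nonneg y) (Ne.symm hy0)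
    have c2 : (a * ‖k‖ + c * ‖h‖) ^ 2 ≤ (a ^ 2 + c ^ 2) * (‖k‖ ^ 2 + ‖h‖ ^ 2) := by
      nlinarith [sq_nonneg (a * ‖h‖ - c * ‖k‖)]
    have c1 : (‖y‖ ^ 2) ^ 2 ≤ (a * ‖k‖ + c * ‖h‖) ^ 2 :=
      pow_le_pow_left₀ (by positivity) e4 2
    have hsum : a ^ 2 + c ^ 2 = ‖y‖ ^ 2 := by linarith
    rw [hsum] at c2
    have hfin : (‖y‖ ^ 2) ^ 2 ≤ ‖y‖ ^ 2 * (‖k‖ ^ 2 + ‖h‖ ^ 2) := le_trans c1 c2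
    have hy2 : 0 < ‖y‖ ^ 2 := by positivity
    nlinarith

lemma aux_contractPos {K H : Type*} [NormedAddCommGroup K] [InnerProductSpace ℂ K] [CompleteSpace K]
    [NormedAddCommGroup H] [InnerProductSpace ℂ H] [CompleteSpace H]
    (A : K →L[ℂ] H) (hA : ‖A‖ ≤ 1) :
    (0 : H →L[ℂ] H) ≤ 1 - A ∘L ContinuousLinearMap.adjoint A := by
  rw [ContinuousLinearMap.nonneg_iff_isPositive, ContinuousLinearMap.isPositive_def']
  constructor
  · show star (1 - A ∘L ContinuousLinearMap.adjoint A) = _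
    rw [star_sub, star_one]
    congr 1
    rw [ContinuousLinearMap.star_eq_adjoint, adjoint_comp, adjoint_adjoint]
  · intro x
    rw [ContinuousLinearMap.reApplyInnerSelf_apply]
    have h1 : ⟪(1 - A ∘L ContinuousLinearMap.adjoint A) x, x⟫_ℂ
        = ⟪x, x⟫_ℂ - ⟪ContinuousLinearMap.adjoint A x, ContinuousLinearMap.adjoint A x⟫_ℂ := by
      have : (1 - A ∘L ContinuousLinearMap.adjoint A) x
          = x - A (ContinuousLinearMap.adjoint A x) := rfl
      rw [this, inner_sub_left]
      congr 1
      rw [← adjoint_inner_right]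
    have h2 : (⟪(1 - A ∘L ContinuousLinearMap.adjoint A) x, x⟫_ℂ).re
        = ‖x‖ ^ 2 - ‖ContinuousLinearMap.adjoint A x‖ ^ 2 := by
      rw [h1, Complex.sub_re, aux_hre, aux_hre]
    have h3 : ‖ContinuousLinearMap.adjoint A x‖ ≤ ‖x‖ := by
      calc ‖ContinuousLinearMap.adjoint A x‖ ≤ ‖ContinuousLinearMap.adjoint A‖ * ‖x‖ :=
            le_opNorm _ _
        _ ≤ 1 * ‖x‖ := by
            apply mul_le_mul_of_nonneg_right _ (norm_nonneg x)
            rw [LinearIsometryEquiv.norm_map ContinuousLinearMap.adjoint A]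
            exact hA
        _ = ‖x‖ := one_mul _
    show (0:ℝ) ≤ RCLike.re _
    rw [RCLike.re_to_complex, h2]
    nlinarith [norm_nonneg (ContinuousLinearMap.adjoint A x), norm_nonneg x]

theorem statement_0 {K₁ K₂ H₁ H₂ : Type*}
    [NormedAddCommGroup K₁] [InnerProductSpace ℂ K₁] [CompleteSpace K₁]
    [NormedAddCommGroup K₂] [InnerProductSpace ℂ K₂] [CompleteSpace K₂]
    [NormedAddCommGroup H₁] [InnerProductSpace ℂ H₁] [CompleteSpace H₁]
    [NormedAddCommGroup H₂] [InnerProductSpace ℂ H₂] [CompleteSpace H₂]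
    (A : K₁ →L[ℂ] H₁) (B : K₂ →L[ℂ] H₂) (X : K₂ →L[ℂ] H₁)
    (T : WithLp 2 (K₁ × K₂) →L[ℂ] WithLp 2 (H₁ × H₂))
    (hT : ∀ k : WithLp 2 (K₁ × K₂),
      WithLp.prodContinuousLinearEquiv 2 ℂ H₁ H₂ (T k)
        = (A (WithLp.prodContinuousLinearEquiv 2 ℂ K₁ K₂ k).1
            + X (WithLp.prodContinuousLinearEquiv 2 ℂ K₁ K₂ k).2,
           B (WithLp.prodContinuousLinearEquiv 2 ℂ K₁ K₂ k).2)) :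
    ‖T‖ ≤ 1 ↔
      ‖A‖ ≤ 1 ∧ ‖B‖ ≤ 1 ∧
        ∃ (DAstar : H₁ →L[ℂ] H₁) (DB : K₂ →L[ℂ] K₂) (L : K₂ →L[ℂ] H₁),
          DAstar.IsPositive ∧
          DAstar ∘L DAstar = 1 - A ∘L ContinuousLinearMap.adjoint A ∧
          DB.IsPositive ∧
          DB ∘L DB = 1 - ContinuousLinearMap.adjoint B ∘L B ∧
          ‖L‖ ≤ 1 ∧ X = DAstar ∘L L ∘L DB := by
  have normTk : ∀ k : WithLp 2 (K₁ × K₂), ‖T k‖ ^ 2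
      = ‖A ((WithLp.prodContinuousLinearEquiv 2 ℂ K₁ K₂) k).1
          + X ((WithLp.prodContinuousLinearEquiv 2 ℂ K₁ K₂) k).2‖ ^ 2
        + ‖B ((WithLp.prodContinuousLinearEquiv 2 ℂ K₁ K₂) k).2‖ ^ 2 := by
    intro k
    rw [WithLp.prod_norm_sq_eq_of_L2 (T k)]
    have h1 := congrArg Prod.fst (hT k)
    have h2 := congrArg Prod.snd (hT k)
    rw [show ((T k).fst : H₁)
        = ((WithLp.prodContinuousLinearEquiv 2 ℂ H₁ H₂) (T k)).1 from rfl,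
      show ((T k).snd : H₂)
        = ((WithLp.prodContinuousLinearEquiv 2 ℂ H₁ H₂) (T k)).2 from rfl, h1, h2]
  have normk : ∀ k : WithLp 2 (K₁ × K₂),
      ‖k‖ ^ 2 = ‖((WithLp.prodContinuousLinearEquiv 2 ℂ K₁ K₂) k).1‖ ^ 2
        + ‖((WithLp.prodContinuousLinearEquiv 2 ℂ K₁ K₂) k).2‖ ^ 2 := by
    intro k
    exact WithLp.prod_norm_sq_eq_of_L2 k
  constructor
  · intro hTn
    have main : ∀ (k₁ : K₁) (k₂ : K₂),
        ‖A k₁ + X k₂‖ ^ 2 + ‖B k₂‖ ^ 2 ≤ ‖k₁‖ ^ 2 + ‖k₂‖ ^ 2 := by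
      intro k₁ k₂
      set k := (WithLp.prodContinuousLinearEquiv 2 ℂ K₁ K₂).symm (k₁, k₂) with hkdef
      have hEk : (WithLp.prodContinuousLinearEquiv 2 ℂ K₁ K₂) k = (k₁, k₂) :=
        (WithLp.prodContinuousLinearEquiv 2 ℂ K₁ K₂).apply_symm_apply _
      have hTk := normTk k
      have hkk := normk k
      rw [hEk] at hTk hkk
      have hle : ‖T k‖ ≤ ‖k‖ := by
        calc ‖T k‖ ≤ ‖T‖ * ‖k‖ := T.le_opNorm k
          _ ≤ 1 * ‖k‖ := mul_le_mul_of_nonneg_right hTn (norm_nonneg _)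
          _ = ‖k‖ := one_mul _
      have hsq : ‖T k‖ ^ 2 ≤ ‖k‖ ^ 2 := pow_le_pow_left₀ (norm_nonneg _) hle 2
      rw [hTk, hkk] at hsq
      exact hsq
    have hA1 : ‖A‖ ≤ 1 := by
      apply opNorm_le_bound _ zero_le_one
      intro x
      rw [one_mul]
      have h := main x 0
      simp only [map_zero, add_zero, norm_zero] at h
      nlinarith [norm_nonneg (A x), norm_nonneg x]
    have hB1 : ‖B‖ ≤ 1 := by
      apply opNorm_le_bound _ zero_le_one
      intro x
      rw [one_mul]
      have h := main 0 x
      simp only [map_zero, zero_add, norm_zero] at h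
      nlinarith [norm_nonneg (B x), norm_nonneg x, sq_nonneg ‖X x‖]
    have posA := aux_contractPos A hA1
    have posB : (0 : K₂ →L[ℂ] K₂) ≤ 1 - ContinuousLinearMap.adjoint B ∘L B := by
      have hB1' : ‖ContinuousLinearMap.adjoint B‖ ≤ 1 := by
        rw [LinearIsometryEquiv.norm_map ContinuousLinearMap.adjoint B]; exact hB1
      have := aux_contractPos (ContinuousLinearMap.adjoint B) hB1'
      rwa [adjoint_adjoint] at this
    set P : H₁ →L[ℂ] H₁ := CFC.sqrt (1 - A ∘L ContinuousLinearMap.adjoint A) with hPdef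
    set Q : K₂ →L[ℂ] K₂ := CFC.sqrt (1 - ContinuousLinearMap.adjoint B ∘L B) with hQdef0
    have hPnn : (0 : H₁ →L[ℂ] H₁) ≤ P := CFC.sqrt_nonneg _
    have hQnn : (0 : K₂ →L[ℂ] K₂) ≤ Q := CFC.sqrt_nonneg _
    have hPpos : P.IsPositive := (nonneg_iff_isPositive P).mp hPnn
    have hQpos : Q.IsPositive := (nonneg_iff_isPositive Q).mp hQnn
    have hP2 : P ∘L P = 1 - A ∘L ContinuousLinearMap.adjoint A :=
      CFC.sqrt_mul_sqrt_self _ posA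
    have hQ2 : Q ∘L Q = 1 - ContinuousLinearMap.adjoint B ∘L B :=
      CFC.sqrt_mul_sqrt_self _ posB
    have hPsa : IsSelfAdjoint P := hPpos.isSelfAdjoint
    have hQsa : IsSelfAdjoint Q := hQpos.isSelfAdjoint
    have hQd : ∀ k : K₂, ‖Q k‖ ^ 2 + ‖B k‖ ^ 2 = ‖k‖ ^ 2 := fun k =>
      aux_defect B Q hQsa hQ2 k
    have hPd : ∀ z : H₁, ‖P z‖ ^ 2 + ‖ContinuousLinearMap.adjoint A z‖ ^ 2 = ‖z‖ ^ 2 :=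
      fun z => aux_defect (ContinuousLinearMap.adjoint A) P hPsa (by rwa [adjoint_adjoint]) z
    have column : ∀ k₂ : K₂, ‖X k₂‖ ≤ ‖Q k₂‖ := by
      intro k₂
      have h1 := main 0 k₂
      simp only [map_zero, zero_add, norm_zero] at h1
      have h2 := hQd k₂
      nlinarith [norm_nonneg (X k₂), norm_nonneg (Q k₂)]
    obtain ⟨C, hC1, hC2, hC3⟩ := aux_douglas Q X column
    have hrowR : ∀ m ∈ LinearMap.range (Q : K₂ →ₗ[ℂ] K₂), ∀ kk : K₁,
        ‖A kk + C m‖ ^ 2 ≤ ‖kk‖ ^ 2 + ‖m‖ ^ 2 := by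
      rintro m ⟨k₂, rfl⟩ kk
      rw [ContinuousLinearMap.coe_coe, hC2]
      have h1 := main kk k₂
      have h2 := hQd k₂
      linarith
    have hrowS : ∀ m ∈ (LinearMap.range (Q : K₂ →ₗ[ℂ] K₂) : Submodule ℂ K₂).topologicalClosure, ∀ kk : K₁,
        ‖A kk + C m‖ ^ 2 ≤ ‖kk‖ ^ 2 + ‖m‖ ^ 2 := by
      intro m hm kk
      have hcl : IsClosed {m : K₂ | ‖A kk + C m‖ ^ 2 ≤ ‖kk‖ ^ 2 + ‖m‖ ^ 2} :=
        isClosed_le (((continuous_const.add C.continuous).norm).pow 2)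
          (continuous_const.add (continuous_norm.pow 2))
      have hsub : (LinearMap.range (Q : K₂ →ₗ[ℂ] K₂) : Set K₂)
          ⊆ {m : K₂ | ‖A kk + C m‖ ^ 2 ≤ ‖kk‖ ^ 2 + ‖m‖ ^ 2} :=
        fun m' hm' => hrowR m' hm' kk
      have hcls := closure_minimal hsub hcl
      have hm' : m ∈ closure (LinearMap.range (Q : K₂ →ₗ[ℂ] K₂) : Set K₂) := by
        rw [← Submodule.topologicalClosure_coe]
        exact hm
      exact hcls hm'
    have hrow : ∀ (kk : K₁) (m : K₂), ‖A kk + C m‖ ^ 2 ≤ ‖kk‖ ^ 2 + ‖m‖ ^ 2 := by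
      intro kk m
      set S := (LinearMap.range (Q : K₂ →ₗ[ℂ] K₂) : Submodule ℂ K₂).topologicalClosure with hSdef
      set m₁ : K₂ := (Submodule.orthogonalProjection S m : K₂) with hm₁def
      have hm₂ : m - m₁ ∈ Sᗮ := Submodule.sub_starProjection_mem_orthogonal (K := S) m
      have hCm : C m = C m₁ := by
        have h0 : C (m - m₁) = 0 := hC3 _ hm₂
        rw [map_sub, sub_eq_zero] at h0
        exact h0
      have hnorm : ‖m₁‖ ≤ ‖m‖ := by
        calc ‖m₁‖ = ‖Submodule.orthogonalProjection S m‖ := rfl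
          _ ≤ ‖Submodule.orthogonalProjection S‖ * ‖m‖ := le_opNorm _ _
          _ ≤ 1 * ‖m‖ :=
              mul_le_mul_of_nonneg_right (Submodule.orthogonalProjection_norm_le _) (norm_nonneg m)
          _ = ‖m‖ := one_mul _
      calc ‖A kk + C m‖ ^ 2 = ‖A kk + C m₁‖ ^ 2 := by rw [hCm]
        _ ≤ ‖kk‖ ^ 2 + ‖m₁‖ ^ 2 := hrowS m₁ (SetLike.coe_mem _) kk
        _ ≤ ‖kk‖ ^ 2 + ‖m‖ ^ 2 := by nlinarith [norm_nonneg m₁, norm_nonneg m]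
    have hadj : ∀ z : H₁, ‖ContinuousLinearMap.adjoint C z‖ ≤ ‖P z‖ := by
      intro z
      set a := ‖ContinuousLinearMap.adjoint A z‖ with hadef
      set c := ‖ContinuousLinearMap.adjoint C z‖ with hcdef
      set w := A (ContinuousLinearMap.adjoint A z) + C (ContinuousLinearMap.adjoint C z) with hwdef
      have e0 : a ^ 2 + c ^ 2 = (⟪w, z⟫_ℂ).re := by
        have h1 : ⟪w, z⟫_ℂ = ⟪A (ContinuousLinearMap.adjoint A z), z⟫_ℂ
            + ⟪C (ContinuousLinearMap.adjoint C z), z⟫_ℂ := by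
          rw [hwdef, inner_add_left]
        have h2 : ⟪A (ContinuousLinearMap.adjoint A z), z⟫_ℂ
            = ⟪ContinuousLinearMap.adjoint A z, ContinuousLinearMap.adjoint A z⟫_ℂ :=
          (adjoint_inner_right A _ _).symm
        have h3 : ⟪C (ContinuousLinearMap.adjoint C z), z⟫_ℂ
            = ⟪ContinuousLinearMap.adjoint C z, ContinuousLinearMap.adjoint C z⟫_ℂ :=
          (adjoint_inner_right C _ _).symm
        rw [h1, h2, h3, Complex.add_re, aux_hre, aux_hre]
      have e1 : (⟪w, z⟫_ℂ).re ≤ ‖w‖ * ‖z‖ :=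
        (Complex.re_le_norm _).trans (norm_inner_le_norm _ _)
      have e2 : ‖w‖ ^ 2 ≤ a ^ 2 + c ^ 2 := hrow _ _
      have e3 : a ^ 2 + c ^ 2 ≤ ‖z‖ ^ 2 := by
        by_cases h0 : a ^ 2 + c ^ 2 = 0
        · rw [h0]; positivity
        · have hpos : 0 < a ^ 2 + c ^ 2 := by
            rcases lt_or_eq_of_le (by positivity : (0:ℝ) ≤ a ^ 2 + c ^ 2) with h | h
            · exact h
            · exact absurd h.symm h0
          have t1 : (a ^ 2 + c ^ 2) ^ 2 ≤ (‖w‖ * ‖z‖) ^ 2 := by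
            apply pow_le_pow_left₀ (le_of_lt hpos) (e0 ▸ e1) 2
          have t2 : (‖w‖ * ‖z‖) ^ 2 ≤ (a ^ 2 + c ^ 2) * ‖z‖ ^ 2 := by
            have := mul_le_mul_of_nonneg_right e2 (sq_nonneg ‖z‖)
            nlinarith [norm_nonneg w, norm_nonneg z]
          nlinarith
      have e4 : c ^ 2 ≤ ‖P z‖ ^ 2 := by
        have := hPd z
        nlinarith
      nlinarith [norm_nonneg (ContinuousLinearMap.adjoint C z), norm_nonneg (P z)]
    obtain ⟨L', hL'1, hL'2, -⟩ := aux_douglas P (ContinuousLinearMap.adjoint C) hadj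
    have hCeq : ContinuousLinearMap.adjoint C = L' ∘L P :=
      ContinuousLinearMap.ext fun z => (hL'2 z).symm
    have hPad : ContinuousLinearMap.adjoint P = P := by
      rw [← ContinuousLinearMap.star_eq_adjoint]; exact hPsa
    have hC : C = P ∘L ContinuousLinearMap.adjoint L' := by
      have h0 := congrArg ContinuousLinearMap.adjoint hCeq
      rwa [adjoint_adjoint, adjoint_comp, hPad] at h0
    refine ⟨hA1, hB1, P, Q, ContinuousLinearMap.adjoint L', hPpos, hP2, hQpos, hQ2, ?_, ?_⟩
    · have hL'n : ‖L'‖ ≤ 1 :=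
        opNorm_le_bound _ zero_le_one (fun x => by rw [one_mul]; exact hL'1 x)
      rw [LinearIsometryEquiv.norm_map ContinuousLinearMap.adjoint L']
      exact hL'n
    · ext k₂
      have : X k₂ = C (Q k₂) := (hC2 k₂).symm
      rw [this, hC]
      rfl
  · rintro ⟨hA1, hB1, P, Q, L, hPpos, hP2, hQpos, hQ2, hL1, hX⟩
    apply opNorm_le_bound _ zero_le_one
    intro k
    rw [one_mul]
    have h1 := normTk k
    have h2 := normk k
    set k₁ := ((WithLp.prodContinuousLinearEquiv 2 ℂ K₁ K₂) k).1 with hk₁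
    set k₂ := ((WithLp.prodContinuousLinearEquiv 2 ℂ K₁ K₂) k).2 with hk₂
    have hXk : X k₂ = P (L (Q k₂)) := by rw [hX]; rfl
    have hrow := aux_rowbound A P hPpos.isSelfAdjoint hP2 k₁ (L (Q k₂))
    have hLle : ‖L (Q k₂)‖ ≤ ‖Q k₂‖ := by
      calc ‖L (Q k₂)‖ ≤ ‖L‖ * ‖Q k₂‖ := le_opNorm _ _
        _ ≤ 1 * ‖Q k₂‖ := mul_le_mul_of_nonneg_right hL1 (norm_nonneg _)
        _ = ‖Q k₂‖ := one_mul _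
    have hQd := aux_defect B Q hQpos.isSelfAdjoint hQ2 k₂
    have hsq : ‖T k‖ ^ 2 ≤ ‖k‖ ^ 2 := by
      rw [h1, h2, hXk]
      nlinarith [norm_nonneg (L (Q k₂)), norm_nonneg (Q k₂), norm_nonneg (B k₂),
        norm_nonneg (A k₁ + P (L (Q k₂)))]
    nlinarith [norm_nonneg (T k), norm_nonneg k]


end RowContr
end
end

section
/- Let T be a commuting row contraction on H whose characteristic function is a polynomial of degree at most m. Then for every α ∈ ℕ^n with |α| ≥ m + 1 and every i ∈ {1, …, n}: |α| · T_i* T^α D_{T*} = α_i · T^{α − e_i} D_{T*} (in particular, T_i* T^α D_{T*} = 0 when α_i = 0). -/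
open scoped InnerProductSpace

set_option maxHeartbeats 1000000
set_option synthInstance.maxHeartbeats 400000

noncomputable section

namespace RowContr

section aux

lemma key_mult {n : ℕ} (f : Fin n → ℕ) (j : Fin n) (hj : 0 < f j) :
    (∑ i, f i) * Nat.multinomial Finset.univ (f - Pi.single j 1)
      = f j * Nat.multinomial Finset.univ f := by
  set g : Fin n → ℕ := f - Pi.single j 1 with hg
  have hgj : g j = f j - 1 := by simp [hg, Pi.single_eq_same]
  have hgk : ∀ k, k ≠ j → g k = f k := by
    intro k hk; simp [hg, Pi.single_eq_of_ne hk]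
  have herase : ∀ (F : ℕ → ℕ), ∏ i ∈ Finset.univ.erase j, F (g i) = ∏ i ∈ Finset.univ.erase j, F (f i) := by
    intro F; exact Finset.prod_congr rfl fun k hk => by rw [hgk k (Finset.ne_of_mem_erase hk)]
  have hsum : ∑ i, g i + 1 = ∑ i, f i := by
    rw [← Finset.add_sum_erase _ g (Finset.mem_univ j), ← Finset.add_sum_erase _ f (Finset.mem_univ j)]
    have : ∑ i ∈ Finset.univ.erase j, g i = ∑ i ∈ Finset.univ.erase j, f i :=
      Finset.sum_congr rfl fun k hk => hgk k (Finset.ne_of_mem_erase hk)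
    omega
  have hprod : ∏ i, Nat.factorial (f i) = f j * ∏ i, Nat.factorial (g i) := by
    rw [← Finset.mul_prod_erase _ (fun i => Nat.factorial (g i)) (Finset.mem_univ j),
        ← Finset.mul_prod_erase _ (fun i => Nat.factorial (f i)) (Finset.mem_univ j),
        herase Nat.factorial, hgj]
    have : Nat.factorial (f j) = f j * Nat.factorial (f j - 1) := by
      conv_lhs => rw [← Nat.succ_pred_eq_of_pos hj]
      rw [Nat.factorial_succ]
      have : (f j).pred + 1 = f j := Nat.succ_pred_eq_of_pos hj
      rw [this]
      rfl
    rw [this]; ring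
  have hP : 0 < ∏ i, Nat.factorial (f i) := Finset.prod_pos fun i _ => Nat.factorial_pos _
  apply Nat.eq_of_mul_eq_mul_left hP
  have specf := Nat.multinomial_spec Finset.univ f
  have specg := Nat.multinomial_spec Finset.univ g
  calc (∏ i, Nat.factorial (f i)) * ((∑ i, f i) * Nat.multinomial Finset.univ g)
      = f j * (∑ i, f i) * ((∏ i, Nat.factorial (g i)) * Nat.multinomial Finset.univ g) := by
        rw [hprod]; ring
    _ = f j * ((∑ i, f i) * Nat.factorial (∑ i, g i)) := by rw [specg]; ring
    _ = f j * Nat.factorial (∑ i, f i) := by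
        rw [← hsum, Nat.factorial_succ]
    _ = (∏ i, Nat.factorial (f i)) * (f j * Nat.multinomial Finset.univ f) := by
        rw [← specf]; ring

lemma sum_mult {n : ℕ} (f : Fin n → ℕ) (hf : 0 < ∑ i, f i) :
    ∑ j ∈ Finset.univ.filter (fun j => 0 < f j),
        Nat.multinomial Finset.univ (f - Pi.single j 1)
      = Nat.multinomial Finset.univ f := by
  apply Nat.eq_of_mul_eq_mul_left hf
  rw [Finset.mul_sum]
  calc ∑ j ∈ Finset.univ.filter (fun j => 0 < f j),
        (∑ i, f i) * Nat.multinomial Finset.univ (f - Pi.single j 1)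
      = ∑ j ∈ Finset.univ.filter (fun j => 0 < f j), f j * Nat.multinomial Finset.univ f := by
        refine Finset.sum_congr rfl fun j hj => key_mult f j (Finset.mem_filter.mp hj).2
    _ = (∑ j ∈ Finset.univ.filter (fun j => 0 < f j), f j) * Nat.multinomial Finset.univ f := by
        rw [Finset.sum_mul]
    _ = (∑ i, f i) * Nat.multinomial Finset.univ f := by
        congr 1
        rw [Finset.sum_filter]
        refine Finset.sum_congr rfl fun j _ => ?_
        split_ifs with h
        · rfl
        · omega

variable {H : Type*} [NormedAddCommGroup H] [InnerProductSpace ℂ H]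

lemma mpow_succ_decomp {n : ℕ} (T : Fin (n+1) → H →L[ℂ] H) (α : Fin (n+1) → ℕ) :
    mpow T α = T 0 ^ α 0 * mpow (fun k : Fin n => T k.succ) (fun k => α k.succ) := by
  simp [mpow, List.ofFn_succ]

lemma mpow_pull : ∀ {n : ℕ} (T : Fin n → H →L[ℂ] H),
    (∀ i j, Commute (T i) (T j)) → ∀ (α : Fin n → ℕ) (i : Fin n), 0 < α i →
    mpow T α = T i * mpow T (α - Pi.single i 1) := by
  intro n
  induction n with
  | zero => exact fun T _ α i => i.elim0
  | succ n ih =>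
    intro T hcomm α i hi
    induction i using Fin.cases with
    | zero =>
      rw [mpow_succ_decomp, mpow_succ_decomp]
      have h1 : ((α - Pi.single 0 1 : Fin (n+1) → ℕ)) 0 = α 0 - 1 := by
        simp [Pi.single_eq_same]
      have h2 : (fun k : Fin n => (α - Pi.single 0 1 : Fin (n+1) → ℕ) k.succ)
          = fun k => α k.succ := by
        funext k
        simp [Pi.single_eq_of_ne (Fin.succ_ne_zero k)]
      rw [h1, h2, ← mul_assoc, ← pow_succ']
      have h3 : α 0 - 1 + 1 = α 0 := Nat.succ_pred_eq_of_pos hi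
      rw [h3]
    | succ i' =>
      rw [mpow_succ_decomp, mpow_succ_decomp]
      have h1 : ((α - Pi.single i'.succ 1 : Fin (n+1) → ℕ)) 0 = α 0 := by
        simp [Pi.single_eq_of_ne (Fin.succ_ne_zero i').symm]
      have h2 : (fun k : Fin n => (α - Pi.single i'.succ 1 : Fin (n+1) → ℕ) k.succ)
          = (fun k => α k.succ) - Pi.single i' 1 := by
        funext k
        simp [Pi.single_apply, Fin.succ_inj]
      rw [h1, h2, ih (fun k => T k.succ) (fun a b => hcomm _ _) (fun k => α k.succ) i' hi]
      rw [← mul_assoc, ← mul_assoc, ((hcomm i'.succ 0).pow_right (α 0)).eq]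

end aux

theorem statement_1 {n : ℕ} {H : Type*} [NormedAddCommGroup H] [InnerProductSpace ℂ H]
    [CompleteSpace H]
    (T : Fin n → H →L[ℂ] H) (m : ℕ)
    (hcomm : ∀ i j, Commute (T i) (T j))
    (hrow : ((1 : H →L[ℂ] H) - ∑ i, T i ∘L star (T i)).IsPositive)
    (Dstar : H →L[ℂ] H) (hD1 : Dstar.IsPositive)
    (hD2 : Dstar ∘L Dstar = 1 - ∑ i, T i ∘L star (T i))
    (D : PiLp 2 (fun _ : Fin n => H) →L[ℂ] PiLp 2 (fun _ : Fin n => H))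
    (hDT1 : D.IsPositive)
    (hDT2 : D ∘L D = 1 - (ContinuousLinearMap.adjoint (rowOp T)) ∘L rowOp T)
    (hpoly : ∀ β : Fin n → ℕ, m < ∑ i, β i → charCoeff T Dstar D β = 0) :
    ∀ α : Fin n → ℕ, m + 1 ≤ ∑ i, α i → ∀ i : Fin n,
      ((∑ i, α i : ℕ) : ℂ) • (star (T i) ∘L mpow T α ∘L Dstar)
        = ((α i : ℕ) : ℂ) • (mpow T (α - Pi.single i 1) ∘L Dstar) := by
  intro α hα i
  have hN : 0 < ∑ k, α k := by omega
  have hθ : charCoeff T Dstar D α = 0 := hpoly α (by omega)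
  -- the adjoint of the row operator is the column of adjoints
  have hadj : ∀ w : H, ContinuousLinearMap.adjoint (rowOp T) w
      = (WithLp.equiv 2 (∀ _ : Fin n, H)).symm
          (fun j => ContinuousLinearMap.adjoint (T j) w) := by
    intro w
    apply ext_inner_left ℂ
    intro v
    rw [ContinuousLinearMap.adjoint_inner_right, PiLp.inner_apply]
    simp only [WithLp.equiv_symm_apply, PiLp.toLp_apply, WithLp.ofLp_toLp, ContinuousLinearMap.adjoint_inner_right]
    rw [rowOp, ContinuousLinearMap.sum_apply, sum_inner]
    simp only [ContinuousLinearMap.comp_apply, PiLp.proj_apply]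
    
  -- pointwise main identity
  have main : ∀ h : H,
      (if 0 < α i then ((Nat.multinomial Finset.univ (α - Pi.single i 1) : ℂ))
          • Dstar (star (mpow T (α - Pi.single i 1)) h) else 0)
        = ∑ j ∈ Finset.univ.filter (fun j => 0 < α j),
            (Nat.multinomial Finset.univ (α - Pi.single j 1) : ℂ)
              • Dstar (star (mpow T (α - Pi.single j 1))
                  (ContinuousLinearMap.adjoint (T j) (T i h))) := by
    intro h
    set z : PiLp 2 (fun _ : Fin n => H) :=
      (WithLp.equiv 2 (∀ _ : Fin n, H)).symm (Pi.single i h) with hzdef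
    have hz : rowOp T z = T i h := by
      rw [rowOp, ContinuousLinearMap.sum_apply]
      have hterm : ∀ j : Fin n,
          (T j).comp (PiLp.proj 2 (fun _ : Fin n => H) j) z
            = if j = i then T i h else 0 := by
        intro j
        by_cases hj : j = i
        · subst hj; simp [hzdef]
        · simp [hzdef, Pi.single_eq_of_ne hj, hj]
      rw [Finset.sum_congr rfl fun j _ => hterm j, Finset.sum_ite_eq' Finset.univ i fun _ => T i h]
      simp
    have hDDz : D (D z) = z - ContinuousLinearMap.adjoint (rowOp T) (rowOp T z) := by
      have := ContinuousLinearMap.ext_iff.mp hDT2 z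
      simpa using this
    have h0 : charCoeff T Dstar D α (D z) = 0 := by rw [hθ]; rfl
    rw [charCoeff] at h0
    simp only [ContinuousLinearMap.sum_apply, ContinuousLinearMap.smul_apply,
      ContinuousLinearMap.comp_apply, PiLp.proj_apply] at h0
    rw [hz] at hDDz
    rw [hDDz, hadj (T i h)] at h0
    simp only [PiLp.sub_apply, WithLp.equiv_symm_apply, PiLp.toLp_apply, WithLp.ofLp_toLp, hzdef, map_sub, smul_sub] at h0
    rw [Finset.sum_sub_distrib] at h0
    have h1 := sub_eq_zero.mp h0
    rw [← h1]
    -- collapse the first sum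
    by_cases hcase : 0 < α i
    · rw [if_pos hcase]
      rw [Finset.sum_eq_single_of_mem i (Finset.mem_filter.mpr ⟨Finset.mem_univ i, hcase⟩)]
      · simp
      · intro b _ hb
        simp [Pi.single_eq_of_ne hb]
    · rw [if_neg hcase]
      refine (Finset.sum_eq_zero fun b hb => ?_).symm
      by_cases hbi : b = i
      · subst hbi; exact absurd (Finset.mem_filter.mp hb).2 hcase
      · simp [Pi.single_eq_of_ne hbi]
  -- operator form
  have key : (if 0 < α i then ((Nat.multinomial Finset.univ (α - Pi.single i 1) : ℂ))
        • (Dstar * star (mpow T (α - Pi.single i 1))) else 0)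
      = ∑ j ∈ Finset.univ.filter (fun j => 0 < α j),
          (Nat.multinomial Finset.univ (α - Pi.single j 1) : ℂ)
            • (Dstar * star (mpow T (α - Pi.single j 1)) * (star (T j) * T i)) := by
    apply ContinuousLinearMap.ext
    intro h
    have hm := main h
    rw [apply_ite (fun f : H →L[ℂ] H => f h)]
    simpa only [ContinuousLinearMap.mul_apply, ContinuousLinearMap.smul_apply,
      ContinuousLinearMap.sum_apply, ContinuousLinearMap.zero_apply,
      ContinuousLinearMap.star_eq_adjoint] using hm
  have key2 := congrArg star key
  simp only [apply_ite star, star_zero, star_smul, star_natCast, star_sum, star_mul,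
    star_star, hD1.isSelfAdjoint.star_eq] at key2
  have key3 : (if 0 < α i then ((Nat.multinomial Finset.univ (α - Pi.single i 1) : ℂ))
        • (mpow T (α - Pi.single i 1) * Dstar) else 0)
      = ((Nat.multinomial Finset.univ α : ℂ)) • (star (T i) * (mpow T α * Dstar)) := by
    rw [key2]
    calc ∑ j ∈ Finset.univ.filter (fun j => 0 < α j),
          (Nat.multinomial Finset.univ (α - Pi.single j 1) : ℂ)
            • (star (T i) * T j * (mpow T (α - Pi.single j 1) * Dstar))
        = ∑ j ∈ Finset.univ.filter (fun j => 0 < α j),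
            (Nat.multinomial Finset.univ (α - Pi.single j 1) : ℂ)
              • (star (T i) * (mpow T α * Dstar)) := by
          refine Finset.sum_congr rfl fun j hj => ?_
          rw [mpow_pull T hcomm α j (Finset.mem_filter.mp hj).2]
          rw [mul_assoc, ← mul_assoc (T j)]
      _ = (∑ j ∈ Finset.univ.filter (fun j => 0 < α j),
            ((Nat.multinomial Finset.univ (α - Pi.single j 1) : ℕ) : ℂ))
              • (star (T i) * (mpow T α * Dstar)) := by
          rw [Finset.sum_smul]
      _ = ((Nat.multinomial Finset.univ α : ℂ)) • (star (T i) * (mpow T α * Dstar)) := by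
          rw [← Nat.cast_sum, sum_mult α hN]
  have hγ : ((Nat.multinomial Finset.univ α : ℕ) : ℂ) ≠ 0 := by
    exact_mod_cast (Nat.multinomial_pos _ _).ne'
  have hXform : star (T i) ∘L mpow T α ∘L Dstar = star (T i) * (mpow T α * Dstar) := rfl
  have hYform : mpow T (α - Pi.single i 1) ∘L Dstar
      = mpow T (α - Pi.single i 1) * Dstar := rfl
  rw [hXform, hYform]
  by_cases hi : 0 < α i
  · rw [if_pos hi] at key3
    apply smul_right_injective (H →L[ℂ] H) hγ
    dsimp only
    rw [smul_comm, ← key3, smul_smul, smul_smul, ← Nat.cast_mul, ← Nat.cast_mul,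
        key_mult α i hi]
    push_cast
    ring_nf
  · have hzero : α i = 0 := by omega
    rw [if_neg hi] at key3
    have hX : star (T i) * (mpow T α * Dstar) = 0 := by
      rcases smul_eq_zero.mp key3.symm with hc | hc
      · exact absurd hc hγ
      · exact hc
    rw [hzero, hX]
    simp


end RowContr
end
end

section
/- Let T be a commuting row contraction on H whose characteristic function is a polynomial of degree at most m. Then for every γ ∈ ℕ^n with |γ| ≥ m and every i ∈ {1, …, n}: (γ_i + 1) · T^γ D_{T*} = (|γ| + 1) · T_i* T_i T^γ D_{T*}. -/
open scoped InnerProductSpace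

set_option maxHeartbeats 1000000
set_option synthInstance.maxHeartbeats 400000

noncomputable section

namespace RowContr

section ListAux
variable {M : Type*} [Monoid M]

lemma ofFn_prod_mul {n : ℕ} (f g : Fin n → M)
    (hfg : ∀ i j, Commute (f i) (g j)) :
    (List.ofFn fun i => f i * g i).prod = (List.ofFn f).prod * (List.ofFn g).prod := by
  induction n with
  | zero => simp
  | succ k ih =>
    rw [List.ofFn_succ, List.ofFn_succ, List.ofFn_succ, List.prod_cons, List.prod_cons,
      List.prod_cons, ih (fun i => f i.succ) (fun i => g i.succ) (fun i j => hfg _ _)]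
    have h1 : Commute (g 0) (List.ofFn fun i => f i.succ).prod := by
      apply Commute.list_prod_right
      intro x hx
      rw [List.mem_ofFn] at hx
      obtain ⟨i, rfl⟩ := hx
      exact (hfg _ _).symm
    rw [mul_assoc (f 0), mul_assoc (f 0), ← mul_assoc (g 0), h1.eq, mul_assoc]

lemma prod_ofFn_eq_single {n : ℕ} (f : Fin n → M) (j : Fin n)
    (h : ∀ i, i ≠ j → f i = 1) : (List.ofFn f).prod = f j := by
  induction n with
  | zero => exact j.elim0
  | succ k ih =>
    rw [List.ofFn_succ, List.prod_cons]
    rcases Fin.eq_zero_or_eq_succ j with rfl | ⟨j', rfl⟩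
    · have h2 : (List.ofFn fun i : Fin k => f i.succ).prod = 1 := by
        apply List.prod_eq_one
        intro x hx
        rw [List.mem_ofFn] at hx
        obtain ⟨i, rfl⟩ := hx
        exact h _ (Fin.succ_ne_zero i)
      rw [h2, mul_one]
    · rw [h 0 (Fin.succ_ne_zero j').symm, one_mul,
        ih (fun i => f i.succ) j' (fun i hi => h i.succ (by simpa [Fin.succ_inj] using hi))]

end ListAux

section NatAux

lemma sum_mul_multinomial_sub {n : ℕ} (β : Fin n → ℕ) (j : Fin n) (hj : 0 < β j) :
    (∑ k, β k) * Nat.multinomial Finset.univ (β - Pi.single j 1) =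
      β j * Nat.multinomial Finset.univ β := by
  set δ : Fin n → ℕ := β - Pi.single j 1 with hδ
  have hspec1 := Nat.multinomial_spec Finset.univ β
  have hspec2 := Nat.multinomial_spec Finset.univ δ
  have hsub : ∀ k, δ k = if k = j then β j - 1 else β k := by
    intro k
    by_cases hk : k = j <;> simp [hδ, Pi.sub_apply, Pi.single_apply, hk]
  have hN : ∑ k, δ k = (∑ k, β k) - 1 := by
    rw [← Finset.add_sum_erase _ δ (Finset.mem_univ j), hsub j, if_pos rfl,
      ← Finset.add_sum_erase _ β (Finset.mem_univ j)]
    have h0 : ∑ k ∈ Finset.univ.erase j, δ k = ∑ k ∈ Finset.univ.erase j, β k := by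
      apply Finset.sum_congr rfl
      intro k hk
      rw [hsub k, if_neg (Finset.mem_erase.1 hk).1]
    rw [h0]
    omega
  have hP : (∏ k, (δ k).factorial) * β j = ∏ k, (β k).factorial := by
    rw [← Finset.mul_prod_erase _ (fun k => (δ k).factorial) (Finset.mem_univ j),
      ← Finset.mul_prod_erase _ (fun k => (β k).factorial) (Finset.mem_univ j)]
    have h1 : ∏ k ∈ Finset.univ.erase j, (δ k).factorial
        = ∏ k ∈ Finset.univ.erase j, (β k).factorial := by
      apply Finset.prod_congr rfl
      intro k hk
      rw [hsub k, if_neg (Finset.mem_erase.1 hk).1]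
    rw [h1, hsub j, if_pos rfl]
    rw [mul_right_comm, mul_comm ((β j - 1).factorial) (β j), Nat.mul_factorial_pred hj.ne']
  have hNpos : 0 < ∑ k, β k :=
    lt_of_lt_of_le hj (Finset.single_le_sum (fun _ _ => Nat.zero_le _) (Finset.mem_univ j))
  have hppos : 0 < ∏ k, (β k).factorial := Finset.prod_pos fun k _ => Nat.factorial_pos _
  apply Nat.eq_of_mul_eq_mul_left hppos
  calc (∏ k, (β k).factorial) * ((∑ k, β k) * Nat.multinomial Finset.univ δ)
      = (∑ k, β k) * (((∏ k, (δ k).factorial) * Nat.multinomial Finset.univ δ) * β j) := by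
        rw [← hP]; ring
    _ = (∑ k, β k) * ((∑ k, δ k).factorial * β j) := by rw [hspec2]
    _ = ((∑ k, β k) * ((∑ k, β k) - 1).factorial) * β j := by rw [hN]; ring
    _ = (∑ k, β k).factorial * β j := by rw [Nat.mul_factorial_pred hNpos.ne']
    _ = (∏ k, (β k).factorial) * (β j * Nat.multinomial Finset.univ β) := by rw [← hspec1]; ring

end NatAux


section MpowAux
variable {n : ℕ} {H : Type*} [NormedAddCommGroup H] [InnerProductSpace ℂ H]

lemma mpow_add (T : Fin n → H →L[ℂ] H) (hcomm : ∀ i j, Commute (T i) (T j))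
    (α β : Fin n → ℕ) : mpow T (α + β) = mpow T α * mpow T β := by
  unfold mpow
  have h : (List.ofFn fun i => T i ^ (α + β) i) = List.ofFn fun i => T i ^ α i * T i ^ β i := by
    congr 1
    funext i
    rw [Pi.add_apply, pow_add]
  rw [h, ofFn_prod_mul _ _ (fun i j => (hcomm i j).pow_pow _ _)]

lemma mpow_single (T : Fin n → H →L[ℂ] H) (j : Fin n) : mpow T (Pi.single j 1) = T j := by
  have h := prod_ofFn_eq_single (M := H →L[ℂ] H) (fun i => T i ^ Pi.single j 1 i) j
    (fun i hi => by simp [Pi.single_apply, hi])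
  simp only [Pi.single_eq_same, pow_one] at h
  unfold mpow
  exact h

end MpowAux

section PiLpAux
variable {n : ℕ} {H : Type*} [NormedAddCommGroup H] [InnerProductSpace ℂ H] [CompleteSpace H]

/-- Inclusion of `H` as the `j`-th coordinate of the Hilbert direct sum. -/
def sing (j : Fin n) (w : H) : PiLp 2 (fun _ : Fin n => H) :=
  (WithLp.equiv 2 _).symm (Pi.single j w)

lemma rowOp_sing (T : Fin n → H →L[ℂ] H) (j : Fin n) (w : H) :
    rowOp T (sing j w) = T j w := by
  simp only [rowOp, ContinuousLinearMap.sum_apply, ContinuousLinearMap.comp_apply,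
    PiLp.proj_apply, sing, WithLp.equiv_symm_apply, PiLp.toLp_apply]
  rw [Finset.sum_eq_single j]
  · simp only [Pi.single_eq_same]
  · intro k _ hk
    simp [Pi.single_apply, hk]
  · intro h
    exact absurd (Finset.mem_univ j) h

lemma adjoint_rowOp_apply (T : Fin n → H →L[ℂ] H) (z : H) (j : Fin n) :
    (ContinuousLinearMap.adjoint (rowOp T) z) j = star (T j) z := by
  apply ext_inner_right ℂ
  intro v
  have h1 : ⟪(ContinuousLinearMap.adjoint (rowOp T) z) j, v⟫_ℂ
      = ⟪ContinuousLinearMap.adjoint (rowOp T) z, sing j v⟫_ℂ := by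
    rw [PiLp.inner_apply, Finset.sum_eq_single j]
    · simp [sing, WithLp.equiv_symm_apply, PiLp.toLp_apply]
    · intro k _ hk
      simp [sing, WithLp.equiv_symm_apply, PiLp.toLp_apply, Pi.single_eq_of_ne hk, hk]
    · intro h
      exact absurd (Finset.mem_univ j) h
  rw [h1, ContinuousLinearMap.adjoint_inner_left, rowOp_sing,
    ContinuousLinearMap.star_eq_adjoint, ContinuousLinearMap.adjoint_inner_left]

end PiLpAux


theorem statement_2 {n : ℕ} {H : Type*} [NormedAddCommGroup H] [InnerProductSpace ℂ H]
    [CompleteSpace H]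
    (T : Fin n → H →L[ℂ] H) (m : ℕ)
    (hcomm : ∀ i j, Commute (T i) (T j))
    (hrow : ((1 : H →L[ℂ] H) - ∑ i, T i ∘L star (T i)).IsPositive)
    (Dstar : H →L[ℂ] H) (hD1 : Dstar.IsPositive)
    (hD2 : Dstar ∘L Dstar = 1 - ∑ i, T i ∘L star (T i))
    (D : PiLp 2 (fun _ : Fin n => H) →L[ℂ] PiLp 2 (fun _ : Fin n => H))
    (hDT1 : D.IsPositive)
    (hDT2 : D ∘L D = 1 - (ContinuousLinearMap.adjoint (rowOp T)) ∘L rowOp T)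
    (hpoly : ∀ β : Fin n → ℕ, m < ∑ i, β i → charCoeff T Dstar D β = 0) :
    ∀ c : Fin n → ℕ, m ≤ ∑ i, c i → ∀ i : Fin n,
      ((c i + 1 : ℕ) : ℂ) • (mpow T c ∘L Dstar)
        = (((∑ i, c i) + 1 : ℕ) : ℂ) • (star (T i) ∘L T i ∘L mpow T c ∘L Dstar) := by
  intro c hc i
  set β : Fin n → ℕ := c + Pi.single i 1 with hβdef
  have hβi : β i = c i + 1 := by simp [hβdef]
  have hβsum : ∑ k, β k = (∑ k, c k) + 1 := by
    simp [hβdef, Finset.sum_add_distrib, Finset.sum_pi_single']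
  have hβm : m < ∑ k, β k := by omega
  have hθ := hpoly β hβm
  have hmpowβ : mpow T β = T i * mpow T c := by
    rw [hβdef, add_comm, mpow_add T hcomm, mpow_single]
  have hsubi : β - Pi.single i 1 = c := by
    funext k
    by_cases hk : k = i
    · subst hk; simp [hβdef]
    · simp [hβdef, Pi.single_eq_of_ne hk]
  have hmem_i : i ∈ Finset.univ.filter (fun j => 0 < β j) := by
    simp only [Finset.mem_filter, Finset.mem_univ, true_and]
    omega
  set γc : ℕ := Nat.multinomial Finset.univ c with hγcdef
  set S : ℕ := ∑ j ∈ Finset.univ.filter (fun j => 0 < β j),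
    Nat.multinomial Finset.univ (β - Pi.single j 1) with hSdef
  -- the key pointwise identity coming from the vanishing Taylor coefficient
  have key : ∀ g : H, (γc : ℂ) • Dstar ((star (mpow T c)) g)
      = (S : ℂ) • Dstar ((star (mpow T β)) (T i g)) := by
    intro g
    have h0 : charCoeff T Dstar D β (D (sing i g)) = 0 := by rw [hθ]; rfl
    have hcompj : ∀ j : Fin n, (D (D (sing i g))) j
        = (Pi.single i g : ∀ _ : Fin n, H) j - star (T j) (T i g) := by
      intro j
      have hDD : D (D (sing i g)) = sing i g
          - ContinuousLinearMap.adjoint (rowOp T) (rowOp T (sing i g)) := by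
        rw [← ContinuousLinearMap.comp_apply, hDT2]
        simp
      have hsc : (sing i g - ContinuousLinearMap.adjoint (rowOp T) (rowOp T (sing i g))) j
          = sing i g j - (ContinuousLinearMap.adjoint (rowOp T) (rowOp T (sing i g))) j := rfl
      rw [hDD, hsc, adjoint_rowOp_apply T, rowOp_sing]
      rfl
    have hexp : (0 : H) = ∑ j ∈ Finset.univ.filter (fun j => 0 < β j),
        (Nat.multinomial Finset.univ (β - Pi.single j 1) : ℂ) •
          Dstar ((star (mpow T (β - Pi.single j 1))) ((D (D (sing i g))) j)) := by
      rw [← h0]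
      simp only [charCoeff, ContinuousLinearMap.sum_apply, ContinuousLinearMap.smul_apply,
        ContinuousLinearMap.comp_apply, PiLp.proj_apply]
    rw [Finset.sum_congr rfl (fun j hj => by rw [hcompj j])] at hexp
    simp only [map_sub, smul_sub] at hexp
    rw [Finset.sum_sub_distrib] at hexp
    have hfirst : ∑ j ∈ Finset.univ.filter (fun j => 0 < β j),
        (Nat.multinomial Finset.univ (β - Pi.single j 1) : ℂ) •
          Dstar ((star (mpow T (β - Pi.single j 1))) ((Pi.single i g : ∀ _ : Fin n, H) j))
        = (γc : ℂ) • Dstar ((star (mpow T c)) g) := by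
      rw [Finset.sum_eq_single_of_mem i hmem_i]
      · simp only [Pi.single_eq_same]
        rw [hsubi]
      · intro j _ hj
        simp [Pi.single_apply, hj]
    have hsecond : ∀ j ∈ Finset.univ.filter (fun j => 0 < β j),
        (Nat.multinomial Finset.univ (β - Pi.single j 1) : ℂ) •
          Dstar ((star (mpow T (β - Pi.single j 1))) (star (T j) (T i g)))
        = (Nat.multinomial Finset.univ (β - Pi.single j 1) : ℂ) •
          Dstar ((star (mpow T β)) (T i g)) := by
      intro j hj
      have hjpos : 0 < β j := (Finset.mem_filter.1 hj).2
      have hmj : mpow T β = T j * mpow T (β - Pi.single j 1) := by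
        rw [← mpow_single T j, ← mpow_add T hcomm]
        congr 1
        funext k
        by_cases hk : k = j
        · subst hk; simp; omega
        · simp [Pi.single_eq_of_ne hk]
      rw [hmj, star_mul, ContinuousLinearMap.mul_apply]
    rw [Finset.sum_congr rfl hsecond, ← Finset.sum_smul, hfirst] at hexp
    have := sub_eq_zero.1 hexp.symm
    rw [this]
    norm_cast
  -- operator form of the key identity
  have E : (γc : ℂ) • (Dstar * star (mpow T c))
      = (S : ℂ) • (Dstar * (star (mpow T β) * T i)) := by
    ext g
    simpa only [ContinuousLinearMap.smul_apply, ContinuousLinearMap.mul_apply] using key g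
  have E2 := congrArg star E
  simp only [star_smul, star_natCast, star_mul, star_star, hD1.isSelfAdjoint.star_eq] at E2
  -- E2 : (γc : ℂ) • (mpow T c * Dstar) = (S : ℂ) • (star (T i) * mpow T β * Dstar)  (assoc?)
  rw [hmpowβ] at E2
  -- arithmetic identity
  have hNpos : 0 < ∑ k, β k := by omega
  have hNγ : (∑ k, β k) * S = (∑ k, β k) * Nat.multinomial Finset.univ β := by
    rw [hSdef, Finset.mul_sum,
      Finset.sum_congr rfl (fun j hj => sum_mul_multinomial_sub β j (Finset.mem_filter.1 hj).2),
      ← Finset.sum_mul]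
    congr 1
    exact Finset.sum_filter_of_ne (fun j _ hj => Nat.pos_of_ne_zero hj)
  have hQi : (∑ k, β k) * γc = β i * Nat.multinomial Finset.univ β := by
    have h := sum_mul_multinomial_sub β i (by omega)
    rwa [hsubi] at h
  have harith : (c i + 1) * S = ((∑ k, c k) + 1) * γc := by
    apply Nat.eq_of_mul_eq_mul_left hNpos
    calc (∑ k, β k) * ((c i + 1) * S)
        = (c i + 1) * ((∑ k, β k) * S) := by ring
      _ = (c i + 1) * ((∑ k, β k) * Nat.multinomial Finset.univ β) := by rw [hNγ]
      _ = (∑ k, β k) * ((c i + 1) * Nat.multinomial Finset.univ β) := by ring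
      _ = (∑ k, β k) * (β i * Nat.multinomial Finset.univ β) := by rw [hβi]
      _ = (∑ k, β k) * ((∑ k, β k) * γc) := by rw [← hQi]
      _ = (∑ k, β k) * (((∑ k, c k) + 1) * γc) := by rw [hβsum]
  have hγne : (γc : ℂ) ≠ 0 := Nat.cast_ne_zero.2 (Nat.multinomial_pos _ _).ne'
  apply smul_right_injective (H →L[ℂ] H) hγne
  show (γc : ℂ) • _ = (γc : ℂ) • _
  calc (γc : ℂ) • ((c i + 1 : ℕ) : ℂ) • (mpow T c ∘L Dstar)
      = ((c i + 1 : ℕ) : ℂ) • (γc : ℂ) • (mpow T c * Dstar) := by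
        rw [smul_comm]; rfl
    _ = ((c i + 1 : ℕ) : ℂ) • (S : ℂ) • (star (T i) * (T i * mpow T c) * Dstar) := by
        rw [E2]
    _ = (((c i + 1) * S : ℕ) : ℂ) • (star (T i) * (T i * mpow T c) * Dstar) := by
        rw [smul_smul]; norm_cast
    _ = ((((∑ k, c k) + 1) * γc : ℕ) : ℂ) • (star (T i) * (T i * mpow T c) * Dstar) := by
        rw [harith]
    _ = (γc : ℂ) • (((∑ k, c k) + 1 : ℕ) : ℂ) • (star (T i) ∘L T i ∘L mpow T c ∘L Dstar) := by
        rw [smul_smul]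
        norm_cast
        rw [Nat.mul_comm]
        rfl

end RowContr
end
end

section
/- Let T be a commuting row contraction on H and let K be the closure of the span of {T^α D_{T*} h : h ∈ H, α ∈ ℕ^n}. Then for h ∈ H the following are equivalent: (i) h ⊥ K; (ii) D_{T*} T^{*α} h = 0 for every α ∈ ℕ^n; (iii) ∑_{α ∈ ℕ^n, |α| = k} γ_α ‖T^{*α} h‖² = ‖h‖² for every k ∈ ℕ. Consequently K^⊥ = H_c, where H_c := {h ∈ H : ∑_{|α|=k} γ_α ‖T^{*α} h‖² = ‖h‖² for all k ∈ ℕ}. -/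
open scoped InnerProductSpace

set_option maxHeartbeats 1000000
set_option synthInstance.maxHeartbeats 400000

noncomputable section

namespace RowContr

/-! ### Auxiliary lemmas -/

section Aux

theorem ofFn_prod_update {M : Type*} [Monoid M] : ∀ {n : ℕ} (f : Fin n → M) (j : Fin n) (c : M),
    (∀ i, Commute c (f i)) →
    (List.ofFn (Function.update f j (c * f j))).prod = c * (List.ofFn f).prod := by
  intro n
  induction n with
  | zero => exact fun f j => j.elim0
  | succ m ih =>
    intro f j c hc
    rw [List.ofFn_succ, List.ofFn_succ, List.prod_cons, List.prod_cons]
    refine Fin.cases ?_ ?_ j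
    · rw [Function.update_self]
      have : (fun i : Fin m => Function.update f 0 (c * f 0) i.succ) = fun i => f i.succ := by
        funext i; simp [Function.update_of_ne (Fin.succ_ne_zero i)]
      rw [this, mul_assoc]
    · intro i
      have h0 : Function.update f i.succ (c * f i.succ) 0 = f 0 :=
        Function.update_of_ne (Fin.succ_ne_zero i).symm _ _
      have ht : (fun l : Fin m => Function.update f i.succ (c * f i.succ) l.succ)
          = Function.update (fun l : Fin m => f l.succ) i (c * f i.succ) := by
        funext l
        by_cases h : l = i
        · subst h; simp
        · simp [Function.update_of_ne h,
            Function.update_of_ne (fun hh => h (Fin.succ_injective _ hh))]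
      rw [h0, ht, ih _ i c (fun l => hc _), ← mul_assoc, ← mul_assoc, (hc 0).eq]

variable {n : ℕ} {H : Type*} [NormedAddCommGroup H] [InnerProductSpace ℂ H]

theorem mpow_zero (T : Fin n → H →L[ℂ] H) : mpow T 0 = 1 := by
  refine List.prod_eq_one fun x hx => ?_
  rw [List.mem_ofFn] at hx
  obtain ⟨i, rfl⟩ := hx
  simp

theorem commute_mpow (T : Fin n → H →L[ℂ] H) (hcomm : ∀ i j, Commute (T i) (T j))
    (j : Fin n) (α : Fin n → ℕ) : Commute (T j) (mpow T α) := by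
  refine Commute.list_prod_right _ _ fun x hx => ?_
  rw [List.mem_ofFn] at hx
  obtain ⟨i, rfl⟩ := hx
  exact (hcomm j i).pow_right _

theorem mpow_add_single (T : Fin n → H →L[ℂ] H) (hcomm : ∀ i j, Commute (T i) (T j))
    (α : Fin n → ℕ) (j : Fin n) :
    mpow T (α + Pi.single j 1) = mpow T α * T j := by
  have key : (fun i => T i ^ ((α + Pi.single j 1 : Fin n → ℕ) i))
      = Function.update (fun i => T i ^ α i) j (T j * T j ^ α j) := by
    funext i
    by_cases h : i = j
    · subst h
      rw [Function.update_self, Pi.add_apply, Pi.single_eq_same, pow_succ']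
    · rw [Function.update_of_ne h, Pi.add_apply, Pi.single_eq_of_ne h, add_zero]
  rw [mpow, key, ofFn_prod_update _ j _ fun i => (hcomm j i).pow_right _]
  exact (commute_mpow T hcomm j α).eq

theorem mem_multiIdx {k : ℕ} {α : Fin n → ℕ} : α ∈ multiIdx n k ↔ ∑ i, α i = k := by
  constructor
  · exact fun h => (Finset.mem_filter.1 h).2
  · intro h
    refine Finset.mem_filter.2 ⟨Fintype.mem_piFinset.2 fun i => Finset.mem_range.2 ?_, h⟩
    have : α i ≤ ∑ l, α l := Finset.single_le_sum (fun l _ => Nat.zero_le _) (Finset.mem_univ i)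
    omega

theorem multiIdx_zero : multiIdx n 0 = {0} := by
  ext α
  rw [Finset.mem_singleton, mem_multiIdx, Finset.sum_eq_zero_iff]
  constructor
  · intro hα; funext i; exact hα i (Finset.mem_univ i)
  · rintro rfl; simp

theorem sub_add_single (β : Fin n → ℕ) (j : Fin n) (h : 0 < β j) :
    β - Pi.single j 1 + Pi.single j 1 = β := by
  funext i
  by_cases hi : i = j
  · subst hi; simp only [Pi.add_apply, Pi.sub_apply, Pi.single_eq_same]; omega
  · simp [Pi.single_eq_of_ne hi]

theorem add_sub_single (α : Fin n → ℕ) (j : Fin n) :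
    α + Pi.single j 1 - Pi.single j 1 = α := by
  funext i
  by_cases hi : i = j
  · subst hi; simp
  · simp [Pi.single_eq_of_ne hi]

theorem sum_add_single (α : Fin n → ℕ) (j : Fin n) :
    ∑ i, (α + Pi.single j 1 : Fin n → ℕ) i = (∑ i, α i) + 1 := by
  simp [Finset.sum_add_distrib]

theorem sum_sub_single (β : Fin n → ℕ) (j : Fin n) (h : 0 < β j) :
    ∑ i, (β - Pi.single j 1 : Fin n → ℕ) i = (∑ i, β i) - 1 := by
  have := sum_add_single (β - Pi.single j 1) j
  rw [sub_add_single β j h] at this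
  omega

open Nat in
theorem mult_absorb (f : Fin n → ℕ) (j : Fin n) (hj : 0 < f j) :
    (∑ i, f i) * Nat.multinomial Finset.univ (f - Pi.single j 1)
      = f j * Nat.multinomial Finset.univ f := by
  set g : Fin n → ℕ := f - Pi.single j 1 with hg
  have hfg : ∀ i, i ≠ j → f i = g i := by
    intro i hi
    simp [hg, Pi.single_eq_of_ne hi]
  have hfj : f j = g j + 1 := by
    simp only [hg, Pi.sub_apply, Pi.single_eq_same]
    omega
  have hsum : ∑ i, f i = (∑ i, g i) + 1 := by
    rw [← Finset.sum_add_sum_compl {j}, ← Finset.sum_add_sum_compl {j} (f := g)]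
    simp only [Finset.sum_singleton, hfj]
    have : ∑ i ∈ ({j}ᶜ : Finset (Fin n)), f i = ∑ i ∈ ({j}ᶜ : Finset (Fin n)), g i :=
      Finset.sum_congr rfl fun i hi => hfg i (by simpa using hi)
    omega
  have hprod : ∏ i, (f i)! = f j * ∏ i, (g i)! := by
    rw [← Finset.mul_prod_erase Finset.univ _ (Finset.mem_univ j),
        ← Finset.mul_prod_erase Finset.univ (fun i => (g i)!) (Finset.mem_univ j)]
    have : ∏ i ∈ Finset.univ.erase j, (f i)! = ∏ i ∈ Finset.univ.erase j, (g i)! :=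
      Finset.prod_congr rfl fun i hi => by rw [hfg i (Finset.mem_erase.1 hi).1]
    rw [this, hfj, Nat.factorial_succ, ← hfj, mul_assoc]
  have spec_g := Nat.multinomial_spec Finset.univ g
  have spec_f := Nat.multinomial_spec Finset.univ f
  have hP : 0 < ∏ i, (f i)! := Finset.prod_pos fun i _ => Nat.factorial_pos _
  refine Nat.eq_of_mul_eq_mul_left hP ?_
  calc (∏ i, (f i)!) * ((∑ i, f i) * Nat.multinomial Finset.univ g)
      = (∑ i, f i) * f j * ((∏ i, (g i)!) * Nat.multinomial Finset.univ g) := by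
        rw [hprod]; ring
    _ = (∑ i, f i) * f j * (∑ i, g i)! := by rw [spec_g]
    _ = f j * (((∑ i, g i) + 1) * (∑ i, g i)!) := by rw [hsum]; ring
    _ = f j * ((∑ i, g i) + 1)! := by rw [Nat.factorial_succ]
    _ = f j * (∑ i, f i)! := by rw [hsum]
    _ = f j * ((∏ i, (f i)!) * Nat.multinomial Finset.univ f) := by rw [spec_f]
    _ = (∏ i, (f i)!) * (f j * Nat.multinomial Finset.univ f) := by ring

theorem mult_pascal {k : ℕ} (f : Fin n → ℕ) (hf : ∑ i, f i = k + 1) :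
    Nat.multinomial Finset.univ f
      = ∑ j ∈ Finset.univ.filter (fun j => 0 < f j),
          Nat.multinomial Finset.univ (f - Pi.single j 1) := by
  refine Nat.eq_of_mul_eq_mul_left (Nat.succ_pos k) ?_
  rw [Finset.mul_sum]
  have : ∀ j ∈ Finset.univ.filter (fun j => 0 < f j),
      (k + 1) * Nat.multinomial Finset.univ (f - Pi.single j 1)
        = f j * Nat.multinomial Finset.univ f := by
    intro j hj
    rw [← hf]
    exact mult_absorb f j (Finset.mem_filter.1 hj).2
  rw [Finset.sum_congr rfl this, ← Finset.sum_mul]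
  congr 1
  rw [Finset.sum_filter_of_ne (fun i _ hne => Nat.pos_of_ne_zero hne), hf]

theorem sum_multiIdx_succ {k : ℕ} (x : (Fin n → ℕ) → ℝ) :
    ∑ β ∈ multiIdx n (k + 1), (Nat.multinomial Finset.univ β : ℝ) * x β
      = ∑ α ∈ multiIdx n k, (Nat.multinomial Finset.univ α : ℝ)
          * ∑ j, x (α + Pi.single j 1) := by
  have LHS : ∑ β ∈ multiIdx n (k + 1), (Nat.multinomial Finset.univ β : ℝ) * x β
      = ∑ β ∈ multiIdx n (k + 1), ∑ j ∈ Finset.univ.filter (fun j => 0 < β j),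
          (Nat.multinomial Finset.univ (β - Pi.single j 1) : ℝ) * x β := by
    refine Finset.sum_congr rfl fun β hβ => ?_
    rw [mult_pascal β (mem_multiIdx.1 hβ)]
    push_cast
    rw [Finset.sum_mul]
  rw [LHS]
  have RHS : ∀ α : Fin n → ℕ, (Nat.multinomial Finset.univ α : ℝ) * ∑ j, x (α + Pi.single j 1)
      = ∑ j : Fin n, (Nat.multinomial Finset.univ α : ℝ) * x (α + Pi.single j 1) :=
    fun α => Finset.mul_sum _ _ _
  rw [Finset.sum_congr rfl fun α _ => RHS α]
  rw [Finset.sum_sigma', Finset.sum_sigma']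
  refine Finset.sum_nbij' (i := fun p => ⟨p.1 - Pi.single p.2 1, p.2⟩)
    (j := fun p => ⟨p.1 + Pi.single p.2 1, p.2⟩) ?_ ?_ ?_ ?_ ?_
  · rintro ⟨β, j⟩ hp
    simp only [Finset.mem_sigma, mem_multiIdx] at hp ⊢
    refine ⟨?_, Finset.mem_univ _⟩
    rw [sum_sub_single β j (Finset.mem_filter.1 hp.2).2, hp.1]
    omega
  · rintro ⟨α, j⟩ hp
    simp only [Finset.mem_sigma, mem_multiIdx] at hp ⊢
    refine ⟨by rw [sum_add_single, hp.1], Finset.mem_filter.2 ⟨Finset.mem_univ _, ?_⟩⟩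
    simp
  · rintro ⟨β, j⟩ hp
    simp only [Finset.mem_sigma] at hp
    have := sub_add_single β j (Finset.mem_filter.1 hp.2).2
    simp [this]
  · rintro ⟨α, j⟩ hp
    simp [add_sub_single]
  · rintro ⟨β, j⟩ hp
    simp only [Finset.mem_sigma] at hp
    rw [sub_add_single β j (Finset.mem_filter.1 hp.2).2]

variable [CompleteSpace H]

theorem defect_identity (T : Fin n → H →L[ℂ] H) (Dstar : H →L[ℂ] H)
    (hsym : IsSelfAdjoint Dstar)
    (hD2 : Dstar ∘L Dstar = 1 - ∑ i, T i ∘L star (T i)) (g : H) :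
    ‖g‖ ^ 2 = ‖Dstar g‖ ^ 2 + ∑ j, ‖star (T j) g‖ ^ 2 := by
  simp only [ContinuousLinearMap.star_eq_adjoint] at hD2 ⊢
  have key : (⟪g, g⟫_ℂ : ℂ) = ⟪Dstar g, Dstar g⟫_ℂ
      + ∑ j, ⟪ContinuousLinearMap.adjoint (T j) g, ContinuousLinearMap.adjoint (T j) g⟫_ℂ := by
    have h1 : (Dstar ∘L Dstar) g + (∑ i, T i ∘L ContinuousLinearMap.adjoint (T i)) g = g := by
      rw [hD2]; simp
    calc (⟪g, g⟫_ℂ : ℂ)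
        = ⟪(Dstar ∘L Dstar) g + (∑ i, T i ∘L ContinuousLinearMap.adjoint (T i)) g, g⟫_ℂ := by
          rw [h1]
      _ = ⟪(Dstar ∘L Dstar) g, g⟫_ℂ
          + ∑ j, ⟪(T j) (ContinuousLinearMap.adjoint (T j) g), g⟫_ℂ := by
          rw [inner_add_left, ContinuousLinearMap.sum_apply, sum_inner]
          simp [ContinuousLinearMap.comp_apply]
      _ = ⟪Dstar g, Dstar g⟫_ℂ
          + ∑ j, ⟪ContinuousLinearMap.adjoint (T j) g,
              ContinuousLinearMap.adjoint (T j) g⟫_ℂ := by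
          congr 1
          · exact hsym.isSymmetric (Dstar g) g
          · refine Finset.sum_congr rfl fun j _ => ?_
            rw [← ContinuousLinearMap.adjoint_inner_left, ContinuousLinearMap.adjoint_adjoint]
  simp only [inner_self_eq_norm_sq_to_K] at key
  exact_mod_cast key

theorem inner_key (T : Fin n → H →L[ℂ] H) (Dstar : H →L[ℂ] H)
    (hsym : IsSelfAdjoint Dstar) (α : Fin n → ℕ) (g h : H) :
    ⟪mpow T α (Dstar g), h⟫_ℂ = ⟪g, Dstar (star (mpow T α) h)⟫_ℂ := by
  rw [ContinuousLinearMap.star_eq_adjoint]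
  calc ⟪mpow T α (Dstar g), h⟫_ℂ
      = ⟪Dstar g, ContinuousLinearMap.adjoint (mpow T α) h⟫_ℂ :=
        (ContinuousLinearMap.adjoint_inner_right _ _ _).symm
    _ = ⟪g, Dstar (ContinuousLinearMap.adjoint (mpow T α) h)⟫_ℂ :=
        hsym.isSymmetric g _

theorem orth_iff (T : Fin n → H →L[ℂ] H) (Dstar : H →L[ℂ] H)
    (hsym : IsSelfAdjoint Dstar) (h : H) :
    h ∈ (rangeSpanAll T Dstar)ᗮ ↔ ∀ α : Fin n → ℕ, Dstar (star (mpow T α) h) = 0 := by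
  rw [rangeSpanAll, ← Submodule.orthogonal_orthogonal_eq_closure,
    Submodule.triorthogonal_eq_orthogonal]
  constructor
  · intro hh α
    have hv : ∀ g : H, ⟪g, Dstar (star (mpow T α) h)⟫_ℂ = 0 := fun g => by
      rw [← inner_key T Dstar hsym α g h]
      exact (Submodule.mem_orthogonal _ h).1 hh _ (Submodule.subset_span ⟨α, g, rfl⟩)
    have := hv (Dstar (star (mpow T α) h))
    rwa [inner_self_eq_zero] at this
  · intro hh
    rw [Submodule.mem_orthogonal]
    intro u hu
    induction hu using Submodule.span_induction with
    | mem x hx =>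
      obtain ⟨α, g, rfl⟩ := hx
      rw [inner_key T Dstar hsym α g h, hh α, inner_zero_right]
    | zero => exact inner_zero_left _
    | add x y _ _ hx hy => rw [inner_add_left, hx, hy, add_zero]
    | smul a x _ hx => rw [inner_smul_left, hx, mul_zero]

theorem telescope (T : Fin n → H →L[ℂ] H) (hcomm : ∀ i j, Commute (T i) (T j))
    (Dstar : H →L[ℂ] H) (hsym : IsSelfAdjoint Dstar)
    (hD2 : Dstar ∘L Dstar = 1 - ∑ i, T i ∘L star (T i)) (h : H) (k : ℕ) :
    (∑ α ∈ multiIdx n (k + 1),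
        (Nat.multinomial Finset.univ α : ℝ) * ‖star (mpow T α) h‖ ^ 2)
      + ∑ α ∈ multiIdx n k,
          (Nat.multinomial Finset.univ α : ℝ) * ‖Dstar (star (mpow T α) h)‖ ^ 2
    = ∑ α ∈ multiIdx n k, (Nat.multinomial Finset.univ α : ℝ) * ‖star (mpow T α) h‖ ^ 2 := by
  rw [sum_multiIdx_succ (fun β => ‖star (mpow T β) h‖ ^ 2), ← Finset.sum_add_distrib]
  refine Finset.sum_congr rfl fun α _ => ?_
  have hterm : ∀ j, ‖star (mpow T (α + Pi.single j 1)) h‖ ^ 2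
      = ‖star (T j) (star (mpow T α) h)‖ ^ 2 := by
    intro j
    rw [mpow_add_single T hcomm α j, star_mul, ContinuousLinearMap.mul_apply]
  have hsum : ∑ j, ‖star (mpow T (α + Pi.single j 1)) h‖ ^ 2
      = ∑ j, ‖star (T j) (star (mpow T α) h)‖ ^ 2 :=
    Finset.sum_congr rfl fun j _ => hterm j
  rw [hsum, defect_identity T Dstar hsym hD2 (star (mpow T α) h)]
  ring

theorem S_zero (T : Fin n → H →L[ℂ] H) (h : H) :
    ∑ α ∈ multiIdx n 0, (Nat.multinomial Finset.univ α : ℝ) * ‖star (mpow T α) h‖ ^ 2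
      = ‖h‖ ^ 2 := by
  rw [multiIdx_zero, Finset.sum_singleton, mpow_zero, star_one]
  have h1 : Nat.multinomial (Finset.univ : Finset (Fin n)) 0 = 1 := by
    simp [Nat.multinomial]
  rw [h1]
  simp

end Aux

theorem statement_10 {n : ℕ} {H : Type*} [NormedAddCommGroup H] [InnerProductSpace ℂ H]
    [CompleteSpace H]
    (T : Fin n → H →L[ℂ] H)
    (hcomm : ∀ i j, Commute (T i) (T j))
    (hrow : ((1 : H →L[ℂ] H) - ∑ i, T i ∘L star (T i)).IsPositive)
    (Dstar : H →L[ℂ] H) (hD1 : Dstar.IsPositive)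
    (hD2 : Dstar ∘L Dstar = 1 - ∑ i, T i ∘L star (T i)) :
    (∀ h : H,
      (h ∈ (rangeSpanAll T Dstar)ᗮ ↔ ∀ α : Fin n → ℕ, Dstar (star (mpow T α) h) = 0) ∧
      (h ∈ (rangeSpanAll T Dstar)ᗮ ↔ ∀ k : ℕ, ∑ α ∈ multiIdx n k,
        (Nat.multinomial Finset.univ α : ℝ) * ‖star (mpow T α) h‖ ^ 2 = ‖h‖ ^ 2)) ∧
    (((rangeSpanAll T Dstar)ᗮ : Set H) = Hc T) := by
  classical
  have hsym : IsSelfAdjoint Dstar := hD1.isSelfAdjoint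
  have horth : ∀ h : H, h ∈ (rangeSpanAll T Dstar)ᗮ ↔
      ∀ α : Fin n → ℕ, Dstar (star (mpow T α) h) = 0 := fun h => orth_iff T Dstar hsym h
  have hiff2 : ∀ h : H, (∀ α : Fin n → ℕ, Dstar (star (mpow T α) h) = 0) ↔
      (∀ k : ℕ, ∑ α ∈ multiIdx n k,
        (Nat.multinomial Finset.univ α : ℝ) * ‖star (mpow T α) h‖ ^ 2 = ‖h‖ ^ 2) := by
    intro h
    constructor
    · intro hDh k
      induction k with
      | zero => exact S_zero T h
      | succ k ih =>
        have ht := telescope T hcomm Dstar hsym hD2 h k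
        have hz : ∑ α ∈ multiIdx n k,
            (Nat.multinomial Finset.univ α : ℝ) * ‖Dstar (star (mpow T α) h)‖ ^ 2 = 0 :=
          Finset.sum_eq_zero fun α _ => by rw [hDh α]; simp
        rw [hz, add_zero] at ht
        rw [ht, ih]
    · intro hS α
      have hk : α ∈ multiIdx n (∑ i, α i) := mem_multiIdx.2 rfl
      have ht := telescope T hcomm Dstar hsym hD2 h (∑ i, α i)
      rw [hS (∑ i, α i), hS ((∑ i, α i) + 1)] at ht
      have hzero : ∑ β ∈ multiIdx n (∑ i, α i),
          (Nat.multinomial Finset.univ β : ℝ) * ‖Dstar (star (mpow T β) h)‖ ^ 2 = 0 := by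
        linarith
      have hnn : ∀ β ∈ multiIdx n (∑ i, α i),
          (0 : ℝ) ≤ (Nat.multinomial Finset.univ β : ℝ) * ‖Dstar (star (mpow T β) h)‖ ^ 2 :=
        fun β _ => by positivity
      have hterm := (Finset.sum_eq_zero_iff_of_nonneg hnn).1 hzero α hk
      have hγ : (0 : ℝ) < (Nat.multinomial Finset.univ α : ℝ) := by
        exact_mod_cast Nat.multinomial_pos _ _
      have hnorm : ‖Dstar (star (mpow T α) h)‖ ^ 2 = 0 := by
        rcases mul_eq_zero.1 hterm with hc | hc
        · exact absurd hc (ne_of_gt hγ)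
        · exact hc
      have : ‖Dstar (star (mpow T α) h)‖ = 0 := by
        have := pow_eq_zero_iff (n := 2) (by norm_num) |>.1 hnorm
        exact this
      exact norm_eq_zero.1 this
  refine ⟨fun h => ⟨horth h, (horth h).trans (hiff2 h)⟩, ?_⟩
  ext h
  simp only [SetLike.mem_coe, Hc, Set.mem_setOf_eq]
  exact (horth h).trans (hiff2 h)


end RowContr
end
end

section
/- Let T be a commuting row contraction on H, m ∈ ℕ, K the closure of the span of {T^α D_{T*} h : h ∈ H, α ∈ ℕ^n}, and M the closure of the span of {T^α D_{T*} h : h ∈ H, |α| ≥ m}. Then for every α ∈ ℕ^n with |α| ≥ m one has T^α K ⊆ M. Consequently, setting H_nil := K ∩ M^⊥ and P := the orthogonal projection onto H_nil, the compression tuple N_i := P T_i|_{H_nil} satisfies P T^α P = 0 for every α with |α| ≥ m; i.e., N = (N_1, …, N_n) is nilpotent of order at most m. -/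
open scoped InnerProductSpace

set_option maxHeartbeats 1000000
set_option synthInstance.maxHeartbeats 400000

noncomputable section

namespace RowContr

lemma mpow_mul {n : ℕ} {H : Type*} [NormedAddCommGroup H] [InnerProductSpace ℂ H]
    (T : Fin n → H →L[ℂ] H) (hcomm : ∀ i j, Commute (T i) (T j)) (α β : Fin n → ℕ) :
    mpow T α * mpow T β = mpow T (α + β) := by
  induction n with
  | zero => simp [mpow]
  | succ n ih =>
    have e : ∀ (S : Fin (n+1) → H →L[ℂ] H) (γ : Fin (n+1) → ℕ),
        mpow S γ = (S 0) ^ (γ 0) * mpow (fun i => S i.succ) (fun i => γ i.succ) := by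
      intro S γ
      simp [mpow, List.ofFn_succ]
    rw [e T α, e T β, e T (α + β)]
    set T' : Fin n → H →L[ℂ] H := fun i => T i.succ with hT'
    have hcomm' : ∀ i j, Commute (T' i) (T' j) := fun i j => hcomm i.succ j.succ
    have htail : (fun i : Fin n => (α + β) i.succ)
        = (fun i : Fin n => α i.succ) + (fun i : Fin n => β i.succ) := rfl
    have hA : Commute ((T 0) ^ (β 0)) (mpow T' (fun i => α i.succ)) := by
      apply Commute.list_prod_right
      intro x hx
      obtain ⟨i, hi⟩ := List.mem_ofFn.mp hx
      rw [← hi]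
      exact (hcomm 0 i.succ).pow_pow _ _
    have h0 : (α + β) 0 = α 0 + β 0 := rfl
    calc (T 0) ^ (α 0) * mpow T' (fun i => α i.succ) *
          ((T 0) ^ (β 0) * mpow T' (fun i => β i.succ))
        = (T 0) ^ (α 0) * ((mpow T' (fun i => α i.succ) * (T 0) ^ (β 0)) *
            mpow T' (fun i => β i.succ)) := by
          rw [mul_assoc, mul_assoc]
      _ = (T 0) ^ (α 0) * (((T 0) ^ (β 0) * mpow T' (fun i => α i.succ)) *
            mpow T' (fun i => β i.succ)) := by rw [hA.eq]
      _ = ((T 0) ^ (α 0) * (T 0) ^ (β 0)) *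
            (mpow T' (fun i => α i.succ) * mpow T' (fun i => β i.succ)) := by
          rw [mul_assoc, mul_assoc]
      _ = (T 0) ^ ((α + β) 0) * mpow T' (fun i => (α + β) i.succ) := by
          rw [← pow_add, ih T' hcomm', htail, h0]

theorem statement_12 {n : ℕ} {H : Type*} [NormedAddCommGroup H] [InnerProductSpace ℂ H]
    [CompleteSpace H]
    (T : Fin n → H →L[ℂ] H) (m : ℕ)
    (hcomm : ∀ i j, Commute (T i) (T j))
    (hrow : ((1 : H →L[ℂ] H) - ∑ i, T i ∘L star (T i)).IsPositive)
    (Dstar : H →L[ℂ] H) (hD1 : Dstar.IsPositive)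
    (hD2 : Dstar ∘L Dstar = 1 - ∑ i, T i ∘L star (T i))
    (P : H →L[ℂ] H)
    (hP : ∀ h : H, P h ∈ rangeSpanAll T Dstar ⊓ (rangeSpanGE T Dstar m)ᗮ ∧
      h - P h ∈ (rangeSpanAll T Dstar ⊓ (rangeSpanGE T Dstar m)ᗮ)ᗮ) :
    (∀ α : Fin n → ℕ, m ≤ ∑ i, α i →
      ∀ x ∈ rangeSpanAll T Dstar, mpow T α x ∈ rangeSpanGE T Dstar m) ∧
    (∀ α : Fin n → ℕ, m ≤ ∑ i, α i → P ∘L mpow T α ∘L P = 0) := by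
  have key : ∀ α : Fin n → ℕ, m ≤ ∑ i, α i →
      ∀ x ∈ rangeSpanAll T Dstar, mpow T α x ∈ rangeSpanGE T Dstar m := by
    intro α hα x hx
    have hmem : rangeSpanAll T Dstar ≤
        (rangeSpanGE T Dstar m).comap (mpow T α : H →ₗ[ℂ] H) := by
      apply Submodule.topologicalClosure_minimal
      · rw [Submodule.span_le]
        rintro y ⟨β, h, rfl⟩
        refine Submodule.le_topologicalClosure _ ?_
        apply Submodule.subset_span
        refine ⟨α + β, h, ?_, ?_⟩
        · calc m ≤ ∑ i, α i := hα
            _ ≤ ∑ i, α i + ∑ i, β i := Nat.le_add_right _ _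
            _ = ∑ i, (α + β) i := (Finset.sum_add_distrib).symm
        · have hmm := mpow_mul T hcomm α β
          calc mpow T α (mpow T β (Dstar h))
              = (mpow T α * mpow T β) (Dstar h) := rfl
            _ = mpow T (α + β) (Dstar h) := by rw [hmm]
      · exact (Submodule.isClosed_topologicalClosure _).preimage (mpow T α).continuous
    exact hmem hx
  refine ⟨key, ?_⟩
  intro α hα
  ext h
  simp only [ContinuousLinearMap.comp_apply, ContinuousLinearMap.zero_apply]
  set x := mpow T α (P h) with hxdef
  have hxM : x ∈ rangeSpanGE T Dstar m := key α hα _ (hP h).1.1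
  have h1 := (hP x).1
  have h2 := (hP x).2
  have e1 : ⟪x, P x⟫_ℂ = 0 := h1.2 x hxM
  have e2 : ⟪P x, x - P x⟫_ℂ = 0 := h2 (P x) h1
  have hz : ⟪P x, P x⟫_ℂ = 0 := by
    have hsub := inner_sub_right (𝕜 := ℂ) (P x) x (P x)
    rw [e2] at hsub
    have e1' : ⟪P x, x⟫_ℂ = 0 := by
      rw [← inner_conj_symm, e1, map_zero]
    linear_combination e1' + hsub
  exact inner_self_eq_zero.mp hz


end RowContr
end
end

section
/- Let H = H_1 ⊕ H_0 ⊕ H_{−1} be an orthogonal decomposition of a complex Hilbert space, and let T = (T_1, …, T_n) be a commuting row contraction on H such that each T_i is block upper triangular with respect to this decomposition (i.e., T_i H_1 ⊆ H_1 and T_i (H_1 ⊕ H_0) ⊆ H_1 ⊕ H_0). Let W_i := P_{H_{−1}} T_i|_{H_{−1}} be the compressions to H_{−1}. If ∑_{i=1}^n W_i W_i* = I_{H_{−1}} (i.e., W is a spherical co-isometry), then D_{T*} vanishes on H_{−1} and the range of D_{T*} is orthogonal to H_{−1}; that is, D_{T*} x = 0 for all x ∈ H_{−1} and ⟨D_{T*}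 h, x⟩ = 0 for all h ∈ H, x ∈ H_{−1}. -/
open scoped InnerProductSpace

set_option maxHeartbeats 1000000
set_option synthInstance.maxHeartbeats 400000

noncomputable section

namespace RowContr

theorem statement_13 {n : ℕ} {H : Type*} [NormedAddCommGroup H] [InnerProductSpace ℂ H]
    [CompleteSpace H]
    (T : Fin n → H →L[ℂ] H)
    (hcomm : ∀ i j, Commute (T i) (T j))
    (hrow : ((1 : H →L[ℂ] H) - ∑ i, T i ∘L star (T i)).IsPositive)
    (Dstar : H →L[ℂ] H) (hD1 : Dstar.IsPositive)
    (hD2 : Dstar ∘L Dstar = 1 - ∑ i, T i ∘L star (T i))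
    (H1 H0 Hm1 : Submodule ℂ H)
    (hH1 : IsClosed (H1 : Set H)) (hH0 : IsClosed (H0 : Set H))
    (hHm1 : IsClosed (Hm1 : Set H))
    (ho10 : ∀ x ∈ H1, ∀ y ∈ H0, ⟪x, y⟫_ℂ = 0)
    (ho1m : ∀ x ∈ H1, ∀ y ∈ Hm1, ⟪x, y⟫_ℂ = 0)
    (ho0m : ∀ x ∈ H0, ∀ y ∈ Hm1, ⟪x, y⟫_ℂ = 0)
    (hsup : H1 ⊔ H0 ⊔ Hm1 = ⊤)
    (htri1 : ∀ i : Fin n, ∀ x ∈ H1, T i x ∈ H1)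
    (htri10 : ∀ i : Fin n, ∀ x ∈ H1 ⊔ H0, T i x ∈ H1 ⊔ H0)
    (Pm1 : H →L[ℂ] H)
    (hPm1 : ∀ h : H, Pm1 h ∈ Hm1 ∧ h - Pm1 h ∈ Hm1ᗮ)
    (hW : ∀ x ∈ Hm1, ∑ i, Pm1 (T i (Pm1 (star (T i) x))) = x) :
    (∀ x ∈ Hm1, Dstar x = 0) ∧
    (∀ h : H, ∀ x ∈ Hm1, ⟪Dstar h, x⟫_ℂ = 0) := by
  have hsa : ContinuousLinearMap.adjoint Dstar = Dstar := by
    have := hD1.isSelfAdjoint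
    rwa [IsSelfAdjoint, ContinuousLinearMap.star_eq_adjoint] at this
  have key : ∀ x ∈ Hm1, Dstar x = 0 := by
    intro x hx
    set y : Fin n → H := fun i => ContinuousLinearMap.adjoint (T i) x with hy
    set z : Fin n → H := fun i => Pm1 (y i) with hz
    -- orthogonality of the projection pieces
    have horth : ∀ i, ⟪z i, y i - z i⟫_ℂ = 0 := fun i =>
      (Submodule.mem_orthogonal _ _).mp (hPm1 (y i)).2 (z i) (hPm1 (y i)).1
    have horth' : ∀ i, ⟪y i - z i, z i⟫_ℂ = 0 := fun i => by
      rw [← inner_conj_symm, horth i, map_zero]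
    -- Pythagoras
    have hpyth : ∀ i, ‖y i‖ ^ 2 = ‖z i‖ ^ 2 + ‖y i - z i‖ ^ 2 := by
      intro i
      have hdecomp : y i = z i + (y i - z i) := by abel
      calc ‖y i‖ ^ 2 = ‖z i + (y i - z i)‖ ^ 2 := by rw [← hdecomp]
        _ = ‖z i‖ ^ 2 + 2 * RCLike.re ⟪z i, y i - z i⟫_ℂ + ‖y i - z i‖ ^ 2 :=
            norm_add_sq _ _
        _ = ‖z i‖ ^ 2 + ‖y i - z i‖ ^ 2 := by rw [horth i]; simp
    -- ⟪y i, z i⟫ = ⟪z i, z i⟫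
    have hyz : ∀ i, ⟪y i, z i⟫_ℂ = ⟪z i, z i⟫_ℂ := by
      intro i
      have hdecomp : y i = z i + (y i - z i) := by abel
      rw [hdecomp, inner_add_left, horth' i, add_zero]
    -- x in Hm1 is orthogonal to the complement part
    have hproj : ∀ u : H, ⟪x, Pm1 u⟫_ℂ = ⟪x, u⟫_ℂ := by
      intro u
      have h0 : ⟪x, u - Pm1 u⟫_ℂ = 0 :=
        (Submodule.mem_orthogonal _ _).mp (hPm1 u).2 x hx
      have := inner_sub_right (𝕜 := ℂ) x u (Pm1 u)
      rw [h0] at this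
      linear_combination this
    -- the co-isometry identity
    have hxz : ⟪x, x⟫_ℂ = ∑ i, ⟪z i, z i⟫_ℂ := by
      have hWx := hW x hx
      have hz' : ∀ i, Pm1 ((star (T i)) x) = z i := by
        intro i; rw [hz, hy, ContinuousLinearMap.star_eq_adjoint]
      calc ⟪x, x⟫_ℂ = ⟪x, ∑ i, Pm1 (T i (Pm1 ((star (T i)) x)))⟫_ℂ :=
            congrArg (fun w => ⟪x, w⟫_ℂ) hWx.symm
        _ = ∑ i, ⟪x, Pm1 (T i (z i))⟫_ℂ := by
            rw [inner_sum]
            exact Finset.sum_congr rfl fun i _ => by rw [hz' i]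
        _ = ∑ i, ⟪x, T i (z i)⟫_ℂ := Finset.sum_congr rfl fun i _ => hproj _
        _ = ∑ i, ⟪y i, z i⟫_ℂ := by
            refine Finset.sum_congr rfl fun i _ => ?_
            exact (ContinuousLinearMap.adjoint_inner_left (T i) (z i) x).symm
        _ = ∑ i, ⟪z i, z i⟫_ℂ := Finset.sum_congr rfl fun i _ => hyz i
    -- expand the defect inner product
    have hdefect : ∀ v : H, ⟪((1 - ∑ i, T i ∘L star (T i)) v), x⟫_ℂ
        = ⟪v, x⟫_ℂ - ∑ i, ⟪ContinuousLinearMap.adjoint (T i) v, y i⟫_ℂ := by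
      intro v
      rw [ContinuousLinearMap.sub_apply, ContinuousLinearMap.one_apply,
        ContinuousLinearMap.sum_apply, inner_sub_left, sum_inner]
      congr 1
      refine Finset.sum_congr rfl fun i _ => ?_
      rw [ContinuousLinearMap.comp_apply, ContinuousLinearMap.star_eq_adjoint, hy]
      exact (ContinuousLinearMap.adjoint_inner_right (T i) _ x).symm
    -- positivity gives ∑ ‖y i‖² ≤ ‖x‖²
    have hposx : 0 ≤ ‖x‖ ^ 2 - ∑ i, ‖y i‖ ^ 2 := by
      have h := hrow.2 x
      rw [ContinuousLinearMap.reApplyInnerSelf] at h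
      rw [hdefect x] at h
      have hre : RCLike.re (⟪x, x⟫_ℂ - ∑ i, ⟪ContinuousLinearMap.adjoint (T i) x, y i⟫_ℂ)
          = ‖x‖ ^ 2 - ∑ i, ‖y i‖ ^ 2 := by
        rw [map_sub, map_sum]
        congr 1
        · exact inner_self_eq_norm_sq x
        · exact Finset.sum_congr rfl fun i _ => by
            rw [hy]; exact inner_self_eq_norm_sq (y i)
      rwa [hre] at h
    -- ‖x‖² = ∑ ‖z i‖²
    have hxz' : ‖x‖ ^ 2 = ∑ i, ‖z i‖ ^ 2 := by
      have := congrArg RCLike.re hxz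
      rwa [inner_self_eq_norm_sq, map_sum,
        Finset.sum_congr rfl (fun i _ => inner_self_eq_norm_sq (z i))] at this
    -- combine: ∑‖y i‖² = ‖x‖²
    have hsum : ∑ i, ‖y i‖ ^ 2 = ‖x‖ ^ 2 := by
      have h1 : ∑ i, ‖y i‖ ^ 2 = ∑ i, ‖z i‖ ^ 2 + ∑ i, ‖y i - z i‖ ^ 2 := by
        rw [← Finset.sum_add_distrib]
        exact Finset.sum_congr rfl fun i _ => hpyth i
      have h2 : 0 ≤ ∑ i, ‖y i - z i‖ ^ 2 :=
        Finset.sum_nonneg fun i _ => sq_nonneg _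
      linarith [hposx, hxz']
    -- ‖Dstar x‖² = ‖x‖² - ∑ ‖y i‖² = 0
    have hDx : ‖Dstar x‖ ^ 2 = 0 := by
      have h1 : ⟪Dstar x, Dstar x⟫_ℂ = ⟪x, (Dstar ∘L Dstar) x⟫_ℂ := by
        have h := ContinuousLinearMap.adjoint_inner_left Dstar (Dstar x) x
        rw [hsa] at h
        simpa using h
      rw [hD2] at h1
      have h2 : ⟪x, (1 - ∑ i, T i ∘L star (T i)) x⟫_ℂ
          = ⟪x, x⟫_ℂ - ∑ i, ⟪y i, y i⟫_ℂ := by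
        rw [← inner_conj_symm, hdefect x, map_sub, inner_conj_symm]
        congr 1
        rw [map_sum]
        exact Finset.sum_congr rfl fun i _ => by rw [inner_conj_symm, hy]
      rw [h2] at h1
      have := congrArg RCLike.re h1
      rw [inner_self_eq_norm_sq, map_sub, inner_self_eq_norm_sq, map_sum,
        Finset.sum_congr rfl (fun i _ => inner_self_eq_norm_sq (y i))] at this
      rw [this, hsum]
      ring
    have : ‖Dstar x‖ = 0 := by
      have := sq_eq_zero_iff.mp hDx
      exact this
    exact norm_eq_zero.mp this
  refine ⟨key, fun h x hx => ?_⟩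
  calc ⟪Dstar h, x⟫_ℂ = ⟪ContinuousLinearMap.adjoint Dstar h, x⟫_ℂ := by rw [hsa]
    _ = ⟪h, Dstar x⟫_ℂ := ContinuousLinearMap.adjoint_inner_left Dstar x h
    _ = 0 := by rw [key x hx, inner_zero_right]

end RowContr
end
end
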